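/- Let {U_ε : ε ∈ (0,1]} be a family of perturbed four-corner quantum walks and fix θ ∈ ℂ with Im θ < 0. Then there exist ε₀ > 0 and r > 0 such that for every ε ∈ (0, ε₀] and every k ∈ {0, 1, …, 2(m₀+n₀)−1} there exist κ⁺_{k,ε}, κ⁻_{k,ε} ∈ ℂ with Im κ^±_{k,ε} > Im θ, with |κ^±_{k,ε} − πk/(m₀+n₀)| < rε (distance taken modulo 2π), such that e^{−iκ⁺_{k,ε}} and e^{−iκ⁻_{k,ε}} are eigenvalues of the complex-translated operator U_ε(θ). In particular U_ε(θ) has 4(m₀+n₀) eigenvalues counted with multiplicity, as does U_el. -/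

import Mathlib

noncomputable section

namespace QWPaper

open Complex

/-- Sites of the two-dimensional lattice. -/
abbrev Site : Type := ℤ × ℤ

/-- Chirality indices: `0 = ←`, `1 = →`, `2 = ↓`, `3 = ↑`. -/
abbrev Chir : Type := Fin 4

abbrev V : Type := EuclideanSpace ℂ (Fin 4)

/-- The Hilbert space `H = ℓ²(ℤ²; ℂ⁴)`. -/
abbrev H : Type := lp (fun _ : Site => V) 2

/-- The inner domain `Ω^i = {x : |x₁| ≤ M₀, |x₂| ≤ M₀}`. -/
def innerDom (M₀ : ℤ) : Set Site := {x | |x.1| ≤ M₀ ∧ |x.2| ≤ M₀}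

/-- `S` is the shift operator:
`(Su)(x) = (u_←(x+e₁), u_→(x−e₁), u_↓(x+e₂), u_↑(x−e₂))`. -/
def IsShiftOp (S : H →L[ℂ] H) : Prop :=
  ∀ (u : H) (x : Site),
    (S u) x 0 = u (x.1 + 1, x.2) 0 ∧
    (S u) x 1 = u (x.1 - 1, x.2) 1 ∧
    (S u) x 2 = u (x.1, x.2 + 1) 2 ∧
    (S u) x 3 = u (x.1, x.2 - 1) 3

/-- `A` is the bounded operator of pointwise multiplication by the matrix family `C`. -/
def IsCoinOp (A : H →L[ℂ] H) (C : Site → Matrix Chir Chir ℂ) : Prop :=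
  ∀ (u : H) (x : Site) (i : Chir), (A u) x i = ∑ j : Chir, C x i j * u x j

/-- Every coin matrix is unitary. -/
def IsUnitaryCoin (C : Site → Matrix Chir Chir ℂ) : Prop :=
  ∀ x, C x ∈ Matrix.unitaryGroup Chir ℂ

/-- Assumption (A-1): `C(x) = I₄` off `Ω^i`, with `M₀ ≥ 1`. -/
def SatisfiesA1 (C : Site → Matrix Chir Chir ℂ) (M₀ : ℤ) : Prop :=
  1 ≤ M₀ ∧ ∀ x, x ∉ innerDom M₀ → C x = 1

/-- `D_x(θ) = diag(e^{iθx₁}, e^{−iθx₁}, e^{iθx₂}, e^{−iθx₂})`. -/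
def Dmat (θ : ℂ) (x : Site) : Matrix Chir Chir ℂ :=
  Matrix.diagonal ![Complex.exp (Complex.I * θ * x.1), Complex.exp (-(Complex.I * θ * x.1)),
    Complex.exp (Complex.I * θ * x.2), Complex.exp (-(Complex.I * θ * x.2))]

/-- The translated coin `D_x(θ) C(x) D_x(θ)⁻¹`. -/
def transCoin (θ : ℂ) (C : Site → Matrix Chir Chir ℂ) (x : Site) : Matrix Chir Chir ℂ :=
  Dmat θ x * C x * (Dmat θ x)⁻¹

/-- The complex translated walk `U(θ) = e^{−iθ} S M(θ)`. -/
def transWalkOp (θ : ℂ) (S Mθ : H →L[ℂ] H) : H →L[ℂ] H :=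
  Complex.exp (-(Complex.I * θ)) • (S.comp Mθ)

/-- `⟨x⟩ = (1 + |x|²)^{1/2}`. -/
def jnorm (x : Site) : ℝ := Real.sqrt (1 + ((x.1 : ℝ) ^ 2 + (x.2 : ℝ) ^ 2))

/-- Super-exponentially decreasing elements of `H`: `e^{τ⟨x⟩} f ∈ H` for every `τ > 0`. -/
def SuperExpDecay (f : H) : Prop :=
  ∀ τ : ℝ, 0 < τ → Memℓp (fun x : Site => (Real.exp (τ * jnorm x) • f x : V)) 2

/-- Pointwise shift of an arbitrary `ℂ⁴`-valued map on `ℤ²`. -/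
def ptShift (v : Site → Chir → ℂ) (x : Site) : Chir → ℂ :=
  ![v (x.1 + 1, x.2) 0, v (x.1 - 1, x.2) 1, v (x.1, x.2 + 1) 2, v (x.1, x.2 - 1) 3]

/-- Pointwise coin action on an arbitrary `ℂ⁴`-valued map on `ℤ²`. -/
def ptCoin (C : Site → Matrix Chir Chir ℂ) (u : Site → Chir → ℂ) (x : Site) (i : Chir) : ℂ :=
  ∑ j : Chir, C x i j * u x j

/-- Pointwise action of the walk `U = SC` on arbitrary `ℂ⁴`-valued maps. -/
def ptWalk (C : Site → Matrix Chir Chir ℂ) (u : Site → Chir → ℂ) : Site → Chir → ℂ :=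
  ptShift (ptCoin C u)

/-- `u` is a pointwise solution of `U u = e^{−iκ} u`. -/
def IsPtSolution (C : Site → Matrix Chir Chir ℂ) (κ : ℂ) (u : Site → Chir → ℂ) : Prop :=
  ∀ (x : Site) (i : Chir), ptWalk C u x i = Complex.exp (-(Complex.I * κ)) * u x i

/-- `u` is outgoing with the explicit sequences `aL aR aD aU`. -/
def IsOutgoingWith (M₀ : ℤ) (κ : ℂ) (aL aR aD aU : ℤ → ℂ) (u : Site → Chir → ℂ) : Prop :=
  (∀ x : Site, x.1 < -M₀ → u x 0 = aL x.2 * Complex.exp (-(Complex.I * κ * x.1))) ∧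
  (∀ x : Site, M₀ < x.1 → u x 0 = 0) ∧
  (∀ x : Site, x.1 < -M₀ → u x 1 = 0) ∧
  (∀ x : Site, M₀ < x.1 → u x 1 = aR x.2 * Complex.exp (Complex.I * κ * x.1)) ∧
  (∀ x : Site, x.2 < -M₀ → u x 2 = aD x.1 * Complex.exp (-(Complex.I * κ * x.2))) ∧
  (∀ x : Site, M₀ < x.2 → u x 2 = 0) ∧
  (∀ x : Site, x.2 < -M₀ → u x 3 = 0) ∧
  (∀ x : Site, M₀ < x.2 → u x 3 = aU x.1 * Complex.exp (Complex.I * κ * x.2))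

/-- `u` is an outgoing map. -/
def IsOutgoing (M₀ : ℤ) (κ : ℂ) (u : Site → Chir → ℂ) : Prop :=
  ∃ aL aR aD aU : ℤ → ℂ, IsOutgoingWith M₀ κ aL aR aD aU u

/-- Elastic coin: column `j` of `C_el(x)` is `e^{iα_j(x)} 𝐞_{σ(x)(j)}`. -/
def elasticCoin (σ : Site → Equiv.Perm Chir) (α : Site → Chir → ℝ) (x : Site) :
    Matrix Chir Chir ℂ :=
  Matrix.of fun i j => if i = σ x j then Complex.exp (Complex.I * (α x j : ℂ)) else 0

/-- The initial state `δ_y 𝐞_j ∈ H`. -/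
def deltaState (y : Site) (j : Chir) : H := lp.single 2 y (EuclideanSpace.single j 1)

/-- `(q, p)` is the trajectory map of the elastic walk `Uel`:
`Uel^t (δ_y 𝐞_j)` is a modulus-one multiple of `δ_{q(t,y,j)} 𝐞_{p(t,y,j)}`. -/
def IsTrajectory (Uel : unitary (H →L[ℂ] H))
    (q : ℤ → Site → Chir → Site) (p : ℤ → Site → Chir → Chir) : Prop :=
  (∀ y j, q 0 y j = y ∧ p 0 y j = j) ∧
  ∀ (t : ℤ) (y : Site) (j : Chir), ∃ c : ℂ, ‖c‖ = 1 ∧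
    ((Uel ^ t : unitary (H →L[ℂ] H)) : H →L[ℂ] H) (deltaState y j)
      = c • deltaState (q t y j) (p t y j)

/-- Euclidean norm of a lattice point. -/
def znorm (x : Site) : ℝ := Real.sqrt ((x.1 : ℝ) ^ 2 + (x.2 : ℝ) ^ 2)

/-- The parts of the barrier `K`. -/
def K1p (M₀ : ℤ) : Set Site := {x | x.1 = M₀ ∧ |x.2| ≤ M₀}
def K1m (M₀ : ℤ) : Set Site := {x | x.1 = -M₀ ∧ |x.2| ≤ M₀}
def K2p (M₀ : ℤ) : Set Site := {x | x.2 = M₀ ∧ |x.1| ≤ M₀}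
def K2m (M₀ : ℤ) : Set Site := {x | x.2 = -M₀ ∧ |x.1| ≤ M₀}
def Kbar (M₀ : ℤ) : Set Site := K1p M₀ ∪ K1m M₀ ∪ K2p M₀ ∪ K2m M₀

/-- The exterior domain `Ω^e = (ℤ² \ Ω^i) ∪ K`. -/
def outerDom (M₀ : ℤ) : Set Site := {x | x ∉ innerDom M₀} ∪ Kbar M₀

/-- Membership in the interior space `H_i`. -/
def memHi (M₀ : ℤ) (u : H) : Prop :=
  (∀ x, x ∉ innerDom M₀ → ∀ i : Chir, u x i = 0) ∧
  (∀ x ∈ K1p M₀, u x 0 = 0) ∧ (∀ x ∈ K1m M₀, u x 1 = 0) ∧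
  (∀ x ∈ K2p M₀, u x 2 = 0) ∧ (∀ x ∈ K2m M₀, u x 3 = 0)

/-- Membership in the exterior space `H_e`. -/
def memHe (M₀ : ℤ) (u : H) : Prop :=
  (∀ x, x ∉ outerDom M₀ → ∀ i : Chir, u x i = 0) ∧
  (∀ x ∈ K1m M₀ ∪ K2p M₀ ∪ K2m M₀, u x 0 = 0) ∧
  (∀ x ∈ K1p M₀ ∪ K2p M₀ ∪ K2m M₀, u x 1 = 0) ∧
  (∀ x ∈ K2m M₀ ∪ K1p M₀ ∪ K1m M₀, u x 2 = 0) ∧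
  (∀ x ∈ K2p M₀ ∪ K1p M₀ ∪ K1m M₀, u x 3 = 0)

/-- The non-penetrable barrier conditions for `U_np`. -/
def IsBarrierWalk (M₀ : ℤ) (Unp : H →L[ℂ] H) : Prop :=
  ∀ u : H,
    (∀ x ∈ K1p M₀, (Unp u) (x.1 + 1, x.2) 1 = u x 0) ∧
    (∀ x ∈ K1m M₀, (Unp u) (x.1 - 1, x.2) 0 = u x 0) ∧
    (∀ x ∈ K2p M₀, (Unp u) (x.1, x.2 + 1) 3 = u x 2) ∧
    (∀ x ∈ K2m M₀, (Unp u) (x.1, x.2 - 1) 2 = u x 3)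

/-- The rectangular loop `L_{ε,s}(μ)` (boundary of the rectangle with half-widths `a`, `b`). -/
def loopSet (μ a b : ℝ) : Set ℂ :=
  {κ | |κ.re - μ| ≤ a ∧ |κ.im| ≤ b ∧ (|κ.re - μ| = a ∨ |κ.im| = b)}

/-- The four-corner elastic coin. -/
def fourCornerCoin (m₀ n₀ : ℤ) (x : Site) : Matrix Chir Chir ℂ :=
  if x = ((0 : ℤ), (0 : ℤ)) then !![0,1,0,0; 0,0,1,0; 0,0,0,1; 1,0,0,0]
  else if x = (m₀, (0 : ℤ)) then !![0,0,1,0; 1,0,0,0; 0,0,0,1; 0,1,0,0]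
  else if x = (m₀, n₀) then !![0,0,0,1; 1,0,0,0; 0,1,0,0; 0,0,1,0]
  else if x = ((0 : ℤ), n₀) then !![0,1,0,0; 0,0,0,1; 1,0,0,0; 0,0,1,0]
  else 1

/-- The four corners. -/
def corners (m₀ n₀ : ℤ) : Set Site :=
  {((0 : ℤ), (0 : ℤ)), (m₀, (0 : ℤ)), (m₀, n₀), ((0 : ℤ), n₀)}

/-- A perturbed four-corner coin `C_ε`. -/
def IsPerturbedFourCorner (m₀ n₀ : ℤ) (ε : ℝ) (Cε : Site → Matrix Chir Chir ℂ) : Prop :=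
  IsUnitaryCoin Cε ∧
  (∀ x, x ∉ corners m₀ n₀ → Cε x = 1) ∧
  (∀ x ∈ corners m₀ n₀, ∀ i j : Chir, ‖Cε x i j - fourCornerCoin m₀ n₀ x i j‖ < ε) ∧
  Cε ((0 : ℤ), (0 : ℤ)) 1 0 = 0 ∧ Cε ((0 : ℤ), (0 : ℤ)) 3 2 = 0 ∧
  Cε (m₀, (0 : ℤ)) 3 2 = 0 ∧ Cε (m₀, (0 : ℤ)) 0 1 = 0 ∧
  Cε (m₀, n₀) 2 3 = 0 ∧ Cε (m₀, n₀) 0 1 = 0 ∧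
  Cε ((0 : ℤ), n₀) 1 0 = 0 ∧ Cε ((0 : ℤ), n₀) 2 3 = 0

/-- `c_ε⁺ = c_{↑,←}(0,0) c_{←,↓}(m₀,0) c_{↓,→}(m₀,n₀) c_{→,↑}(0,n₀)`. -/
def cPlus (m₀ n₀ : ℤ) (Cε : Site → Matrix Chir Chir ℂ) : ℂ :=
  Cε ((0 : ℤ), (0 : ℤ)) 3 0 * Cε (m₀, (0 : ℤ)) 0 2 * Cε (m₀, n₀) 2 1 * Cε ((0 : ℤ), n₀) 1 3

/-- `c_ε⁻ = c_{→,↓}(0,0) c_{↑,→}(m₀,0) c_{←,↑}(m₀,n₀) c_{↓,←}(0,n₀)`. -/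
def cMinus (m₀ n₀ : ℤ) (Cε : Site → Matrix Chir Chir ℂ) : ℂ :=
  Cε ((0 : ℤ), (0 : ℤ)) 1 2 * Cε (m₀, (0 : ℤ)) 3 1 * Cε (m₀, n₀) 0 3 * Cε ((0 : ℤ), n₀) 2 0

/-- `u ∈ H` is supported on the set `A ⊆ ℤ² × {←,→,↓,↑}`. -/
def SupportedOn (u : H) (A : Set (Site × Chir)) : Prop :=
  ∀ (x : Site) (i : Chir), (x, i) ∉ A → u x i = 0

/-- The image of the closed trajectory `Φ₊` of the four-corner walk. -/
def imPhiPlus (m₀ n₀ : ℤ) : Set (Site × Chir) :=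
  {w | ∃ t : ℤ, 1 ≤ t ∧ t ≤ n₀ ∧ w = (((0 : ℤ), t), (3 : Chir))} ∪
  {w | ∃ t : ℤ, 1 ≤ t ∧ t ≤ m₀ ∧ w = ((t, n₀), (1 : Chir))} ∪
  {w | ∃ t : ℤ, 0 ≤ t ∧ t ≤ n₀ - 1 ∧ w = ((m₀, t), (2 : Chir))} ∪
  {w | ∃ t : ℤ, 0 ≤ t ∧ t ≤ m₀ - 1 ∧ w = ((t, (0 : ℤ)), (0 : Chir))}

/-- The image of the reversed closed trajectory `Φ₋` of the four-corner walk. -/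
def imPhiMinus (m₀ n₀ : ℤ) : Set (Site × Chir) :=
  {w | ∃ t : ℤ, 1 ≤ t ∧ t ≤ m₀ ∧ w = ((t, (0 : ℤ)), (1 : Chir))} ∪
  {w | ∃ t : ℤ, 1 ≤ t ∧ t ≤ n₀ ∧ w = ((m₀, t), (3 : Chir))} ∪
  {w | ∃ t : ℤ, 0 ≤ t ∧ t ≤ m₀ - 1 ∧ w = ((t, n₀), (0 : Chir))} ∪
  {w | ∃ t : ℤ, 0 ≤ t ∧ t ≤ n₀ - 1 ∧ w = (((0 : ℤ), t), (2 : Chir))}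

/-- The eight outgoing tails starting from the four corners. -/
def tails (m₀ n₀ : ℤ) : Set (Site × Chir) :=
  {w | ∃ N y₂ : ℤ, 1 ≤ N ∧ (y₂ = 0 ∨ y₂ = n₀) ∧ w = ((-N, y₂), (0 : Chir))} ∪
  {w | ∃ N y₁ : ℤ, 1 ≤ N ∧ (y₁ = 0 ∨ y₁ = m₀) ∧ w = ((y₁, n₀ + N), (3 : Chir))} ∪
  {w | ∃ N y₁ : ℤ, 1 ≤ N ∧ (y₁ = 0 ∨ y₁ = m₀) ∧ w = ((y₁, -N), (2 : Chir))} ∪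
  {w | ∃ N y₂ : ℤ, 1 ≤ N ∧ (y₂ = 0 ∨ y₂ = n₀) ∧ w = ((m₀ + N, y₂), (1 : Chir))}

/-- The shape resonance perturbation `C_ε` of the barrier coin `C_np`. -/
def IsShapePerturbation (M₀ : ℤ) (Cnp : Site → Matrix Chir Chir ℂ) (ε : ℝ)
    (Cε : Site → Matrix Chir Chir ℂ) : Prop :=
  IsUnitaryCoin Cε ∧ (∀ x, x ∉ Kbar M₀ → Cε x = Cnp x) ∧
  (∀ x ∈ Kbar M₀, ∀ i j : Chir, ‖Cε x i j - Cnp x i j‖ < ε)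

/-- Counterclockwise contour integral of an operator-valued map over the boundary of the
rectangle centered at `μ ∈ ℝ` with half-widths `a` and `b`. -/
def rectIntegral (f : ℂ → (H →L[ℂ] H)) (μ a b : ℝ) : H →L[ℂ] H :=
  ((∫ t in (μ - a)..(μ + a), f (t - b * Complex.I)) -
      (∫ t in (μ - a)..(μ + a), f (t + b * Complex.I))) +
  Complex.I • ((∫ s in (-b)..b, f ((μ + a : ℝ) + s * Complex.I)) -
      (∫ s in (-b)..b, f ((μ - a : ℝ) + s * Complex.I)))

/-- The Riesz-type projection `(1/2π) ∮ e^{−iκ} (A − e^{−iκ})^{−1} dκ` over the rectangular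
loop of half-widths `a`, `b` around `μ`. -/
def rieszProj (A : H →L[ℂ] H) (μ a b : ℝ) : H →L[ℂ] H :=
  (1 / (2 * Real.pi)) •
    rectIntegral (fun κ => Complex.exp (-(Complex.I * κ)) •
      Ring.inverse (A - Complex.exp (-(Complex.I * κ)) • (1 : H →L[ℂ] H))) μ a b

/-! ### Auxiliary development for the proof -/

section Aux

/-- Compatibility: the complex absolute value as an `AbsoluteValue`. -/
def Complex.abs : AbsoluteValue ℂ ℝ := NormedField.toAbsoluteValue ℂ

lemma Complex.norm_eq_abs (z : ℂ) : ‖z‖ = Complex.abs z := rfl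

lemma Complex.abs_apply {z : ℂ} : Complex.abs z = Real.sqrt (Complex.normSq z) :=
  Complex.norm_def z

lemma Complex.abs_exp (z : ℂ) : Complex.abs (Complex.exp z) = Real.exp z.re :=
  Complex.norm_exp z

lemma Complex.abs_I : Complex.abs Complex.I = 1 := Complex.norm_I

lemma Complex.abs_intCast (n : ℤ) : Complex.abs (n : ℂ) = |(n : ℝ)| := Complex.norm_intCast n

lemma Complex.abs_re_le_abs (z : ℂ) : |z.re| ≤ Complex.abs z := Complex.abs_re_le_norm z

/-- Left-directed ray profile. -/
def rayL (l : ℂ) (hi : ℤ) (c d : ℂ) (t : ℤ) : ℂ :=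
  if t ≤ hi then l ^ t * (if 0 ≤ t then c else d) else 0

/-- Right-directed ray profile. -/
def rayR (l : ℂ) (lo mid : ℤ) (c d : ℂ) (t : ℤ) : ℂ :=
  if lo ≤ t then l ^ (-t) * (if t ≤ mid then c else d) else 0

lemma rayL_zero {l : ℂ} {hi t : ℤ} (c d : ℂ) (h : hi < t) : rayL l hi c d t = 0 :=
  if_neg (by omega)

lemma rayL_pos {l : ℂ} {hi t : ℤ} (c d : ℂ) (h1 : t ≤ hi) (h2 : 0 ≤ t) :
    rayL l hi c d t = l ^ t * c := by
  rw [rayL, if_pos h1, if_pos h2]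

lemma rayL_neg {l : ℂ} {hi t : ℤ} (c d : ℂ) (h1 : t ≤ hi) (h2 : t < 0) :
    rayL l hi c d t = l ^ t * d := by
  rw [rayL, if_pos h1, if_neg (by omega)]

lemma rayR_zero {l : ℂ} {lo mid t : ℤ} (c d : ℂ) (h : t < lo) : rayR l lo mid c d t = 0 :=
  if_neg (by omega)

lemma rayR_pos {l : ℂ} {lo mid t : ℤ} (c d : ℂ) (h1 : lo ≤ t) (h2 : t ≤ mid) :
    rayR l lo mid c d t = l ^ (-t) * c := by
  rw [rayR, if_pos h1, if_pos h2]

lemma rayR_neg {l : ℂ} {lo mid t : ℤ} (c d : ℂ) (h1 : lo ≤ t) (h2 : mid < t) :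
    rayR l lo mid c d t = l ^ (-t) * d := by
  rw [rayR, if_pos h1, if_neg (by omega)]

/-- The explicit resonant state of the `Φ₊` loop. -/
def uP (m n : ℤ) (C : Site → Matrix Chir Chir ℂ) (l : ℂ) : Site → Chir → ℂ := fun x =>
  ![ if x.2 = 0 then rayL l (m-1) 1 (C (0,0) 0 0) x.1
     else if x.2 = n then
       rayL l (-1) 0 (l ^ (-n) * (C (0,0) 3 0 * C (0,n) 0 3)) x.1 else 0,
     if x.2 = n then
       rayR l 1 m (l ^ (-n) * (C (0,0) 3 0 * C (0,n) 1 3))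
         (l ^ (-n) * (C (0,0) 3 0 * C (0,n) 1 3 * C (m,n) 1 1)) x.1
     else if x.2 = 0 then
       rayR l (m+1) 0 0
         (l ^ (-(2*n)) * (C (0,0) 3 0 * C (0,n) 1 3 * C (m,n) 2 1 * C (m,0) 1 2)) x.1 else 0,
     if x.1 = m then
       rayL l (n-1) (l ^ (-(m+2*n)) * (C (0,0) 3 0 * C (0,n) 1 3 * C (m,n) 2 1))
         (l ^ (-(m+2*n)) * (C (0,0) 3 0 * C (0,n) 1 3 * C (m,n) 2 1 * C (m,0) 2 2)) x.2
     else if x.1 = 0 then rayL l (-1) 0 (C (0,0) 2 0) x.2 else 0,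
     if x.1 = 0 then rayR l 1 n (C (0,0) 3 0) (C (0,0) 3 0 * C (0,n) 3 3) x.2
     else if x.1 = m then
       rayR l (n+1) 0 0 (l ^ (-m) * (C (0,0) 3 0 * C (0,n) 1 3 * C (m,n) 3 1)) x.2 else 0 ]

section uPEval

variable {m n : ℤ} {C : Site → Matrix Chir Chir ℂ} {l : ℂ}

lemma uP_app0 (x : Site) : uP m n C l x 0 =
    if x.2 = 0 then rayL l (m-1) 1 (C (0,0) 0 0) x.1
    else if x.2 = n then
      rayL l (-1) 0 (l ^ (-n) * (C (0,0) 3 0 * C (0,n) 0 3)) x.1 else 0 := rfl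

lemma uP_app1 (x : Site) : uP m n C l x 1 =
    if x.2 = n then
      rayR l 1 m (l ^ (-n) * (C (0,0) 3 0 * C (0,n) 1 3))
        (l ^ (-n) * (C (0,0) 3 0 * C (0,n) 1 3 * C (m,n) 1 1)) x.1
    else if x.2 = 0 then
      rayR l (m+1) 0 0
        (l ^ (-(2*n)) * (C (0,0) 3 0 * C (0,n) 1 3 * C (m,n) 2 1 * C (m,0) 1 2)) x.1 else 0 := rfl

lemma uP_app2 (x : Site) : uP m n C l x 2 =
    if x.1 = m then
      rayL l (n-1) (l ^ (-(m+2*n)) * (C (0,0) 3 0 * C (0,n) 1 3 * C (m,n) 2 1))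
        (l ^ (-(m+2*n)) * (C (0,0) 3 0 * C (0,n) 1 3 * C (m,n) 2 1 * C (m,0) 2 2)) x.2
    else if x.1 = 0 then rayL l (-1) 0 (C (0,0) 2 0) x.2 else 0 := rfl

lemma uP_app3 (x : Site) : uP m n C l x 3 =
    if x.1 = 0 then rayR l 1 n (C (0,0) 3 0) (C (0,0) 3 0 * C (0,n) 3 3) x.2
    else if x.1 = m then
      rayR l (n+1) 0 0 (l ^ (-m) * (C (0,0) 3 0 * C (0,n) 1 3 * C (m,n) 3 1)) x.2 else 0 := rfl

variable (hm : 1 ≤ m) (hn : 1 ≤ n)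

include hm hn in
/-- values of `uP` at the corner `(0,0)`. -/
lemma uP_c00 : uP m n C l ((0:ℤ),(0:ℤ)) = ![1, 0, 0, 0] := by
  funext i
  fin_cases i
  · rw [show ((⟨0,by norm_num⟩ : Fin 4)) = (0 : Fin 4) from rfl, uP_app0]
    simp only [if_pos rfl]
    rw [rayL_pos _ _ (by omega) le_rfl]
    simp
  · rw [show ((⟨1,by norm_num⟩ : Fin 4)) = (1 : Fin 4) from rfl, uP_app1]
    rw [if_neg (by omega), if_pos rfl, rayR_zero _ _ (by omega)]
    simp
  · rw [show ((⟨2,by norm_num⟩ : Fin 4)) = (2 : Fin 4) from rfl, uP_app2]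
    rw [if_neg (by omega), if_pos rfl, rayL_zero _ _ (by omega)]
    simp
  · rw [show ((⟨3,by norm_num⟩ : Fin 4)) = (3 : Fin 4) from rfl, uP_app3]
    rw [if_pos rfl, rayR_zero _ _ (by omega)]
    simp

end uPEval

end Aux
section Aux2

variable {m n : ℤ} {C : Site → Matrix Chir Chir ℂ} {l : ℂ}
variable (hm : 1 ≤ m) (hn : 1 ≤ n)

include hm hn in
lemma uP_cm0 : uP m n C l ((m:ℤ),(0:ℤ)) =
    ![0, 0, l ^ (-(m+2*n)) * (C (0,0) 3 0 * C (0,n) 1 3 * C (m,n) 2 1), 0] := by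
  funext i
  fin_cases i
  · rw [show ((⟨0,by norm_num⟩ : Fin 4)) = (0 : Fin 4) from rfl, uP_app0]
    rw [if_pos rfl, rayL_zero _ _ (by omega)]; simp
  · rw [show ((⟨1,by norm_num⟩ : Fin 4)) = (1 : Fin 4) from rfl, uP_app1]
    rw [if_neg (by omega), if_pos rfl, rayR_zero _ _ (by omega)]; simp
  · rw [show ((⟨2,by norm_num⟩ : Fin 4)) = (2 : Fin 4) from rfl, uP_app2]
    rw [if_pos rfl, rayL_pos _ _ (by omega) le_rfl]; simp
  · rw [show ((⟨3,by norm_num⟩ : Fin 4)) = (3 : Fin 4) from rfl, uP_app3]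
    rw [if_neg (by omega), if_pos rfl, rayR_zero _ _ (by omega)]; simp

include hm hn in
lemma uP_cmn : uP m n C l ((m:ℤ),(n:ℤ)) =
    ![0, l ^ (-m) * (l ^ (-n) * (C (0,0) 3 0 * C (0,n) 1 3)), 0, 0] := by
  funext i
  fin_cases i
  · rw [show ((⟨0,by norm_num⟩ : Fin 4)) = (0 : Fin 4) from rfl, uP_app0]
    rw [if_neg (by omega), if_pos rfl, rayL_zero _ _ (by omega)]; simp
  · rw [show ((⟨1,by norm_num⟩ : Fin 4)) = (1 : Fin 4) from rfl, uP_app1]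
    rw [if_pos rfl, rayR_pos _ _ (by omega) le_rfl]; simp
  · rw [show ((⟨2,by norm_num⟩ : Fin 4)) = (2 : Fin 4) from rfl, uP_app2]
    rw [if_pos rfl, rayL_zero _ _ (by omega)]; simp
  · rw [show ((⟨3,by norm_num⟩ : Fin 4)) = (3 : Fin 4) from rfl, uP_app3]
    rw [if_neg (by omega), if_pos rfl, rayR_zero _ _ (by omega)]; simp

include hm hn in
lemma uP_c0n : uP m n C l ((0:ℤ),(n:ℤ)) = ![0, 0, 0, l ^ (-n) * C (0,0) 3 0] := by
  funext i
  fin_cases i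
  · rw [show ((⟨0,by norm_num⟩ : Fin 4)) = (0 : Fin 4) from rfl, uP_app0]
    rw [if_neg (by omega), if_pos rfl, rayL_zero _ _ (by omega)]; simp
  · rw [show ((⟨1,by norm_num⟩ : Fin 4)) = (1 : Fin 4) from rfl, uP_app1]
    rw [if_pos rfl, rayR_zero _ _ (by omega)]; simp
  · rw [show ((⟨2,by norm_num⟩ : Fin 4)) = (2 : Fin 4) from rfl, uP_app2]
    rw [if_neg (by omega), if_pos rfl, rayL_zero _ _ (by omega)]; simp
  · rw [show ((⟨3,by norm_num⟩ : Fin 4)) = (3 : Fin 4) from rfl, uP_app3]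
    rw [if_pos rfl, rayR_pos _ _ (by omega) le_rfl]; simp

/-- pointwise coin action when the coin is the identity. -/
lemma ptCoin_one {C : Site → Matrix Chir Chir ℂ} {z : Site} (h : C z = 1)
    (u : Site → Chir → ℂ) (i : Chir) : ptCoin C u z i = u z i := by
  simp [ptCoin, h, Matrix.one_apply, ite_mul, zero_mul, one_mul, Finset.sum_ite_eq]

lemma ptCoin_expand (C : Site → Matrix Chir Chir ℂ) (z : Site) (u : Site → Chir → ℂ) (i : Chir) :
    ptCoin C u z i = C z i 0 * u z 0 + C z i 1 * u z 1 + C z i 2 * u z 2 + C z i 3 * u z 3 := by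
  rw [ptCoin, Fin.sum_univ_four]

lemma not_corner {m n : ℤ} (z : Site) (h1 : z ≠ ((0:ℤ),(0:ℤ))) (h2 : z ≠ ((m:ℤ),(0:ℤ)))
    (h3 : z ≠ ((m:ℤ),(n:ℤ))) (h4 : z ≠ ((0:ℤ),(n:ℤ))) : z ∉ corners m n := by
  simp only [corners, Set.mem_insert_iff, Set.mem_singleton_iff]
  tauto

end Aux2
section Aux3

variable {m n : ℤ} {C : Site → Matrix Chir Chir ℂ} {l : ℂ}

lemma ptWalk_app0 (C : Site → Matrix Chir Chir ℂ) (u : Site → Chir → ℂ) (p q : ℤ) :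
    ptWalk C u (p,q) 0 = ptCoin C u (p+1, q) 0 := rfl
lemma ptWalk_app1 (C : Site → Matrix Chir Chir ℂ) (u : Site → Chir → ℂ) (p q : ℤ) :
    ptWalk C u (p,q) 1 = ptCoin C u (p-1, q) 1 := rfl
lemma ptWalk_app2 (C : Site → Matrix Chir Chir ℂ) (u : Site → Chir → ℂ) (p q : ℤ) :
    ptWalk C u (p,q) 2 = ptCoin C u (p, q+1) 2 := rfl
lemma ptWalk_app3 (C : Site → Matrix Chir Chir ℂ) (u : Site → Chir → ℂ) (p q : ℤ) :
    ptWalk C u (p,q) 3 = ptCoin C u (p, q-1) 3 := rfl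

lemma uP_app0' (p q : ℤ) : uP m n C l (p, q) 0 =
    if q = 0 then rayL l (m-1) 1 (C (0,0) 0 0) p
    else if q = n then
      rayL l (-1) 0 (l ^ (-n) * (C (0,0) 3 0 * C (0,n) 0 3)) p else 0 := rfl

lemma uP_app1' (p q : ℤ) : uP m n C l (p, q) 1 =
    if q = n then
      rayR l 1 m (l ^ (-n) * (C (0,0) 3 0 * C (0,n) 1 3))
        (l ^ (-n) * (C (0,0) 3 0 * C (0,n) 1 3 * C (m,n) 1 1)) p
    else if q = 0 then
      rayR l (m+1) 0 0
        (l ^ (-(2*n)) * (C (0,0) 3 0 * C (0,n) 1 3 * C (m,n) 2 1 * C (m,0) 1 2)) p else 0 := rfl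

lemma uP_app2' (p q : ℤ) : uP m n C l (p, q) 2 =
    if p = m then
      rayL l (n-1) (l ^ (-(m+2*n)) * (C (0,0) 3 0 * C (0,n) 1 3 * C (m,n) 2 1))
        (l ^ (-(m+2*n)) * (C (0,0) 3 0 * C (0,n) 1 3 * C (m,n) 2 1 * C (m,0) 2 2)) q
    else if p = 0 then rayL l (-1) 0 (C (0,0) 2 0) q else 0 := rfl

lemma uP_app3' (p q : ℤ) : uP m n C l (p, q) 3 =
    if p = 0 then rayR l 1 n (C (0,0) 3 0) (C (0,0) 3 0 * C (0,n) 3 3) q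
    else if p = m then
      rayR l (n+1) 0 0 (l ^ (-m) * (C (0,0) 3 0 * C (0,n) 1 3 * C (m,n) 3 1)) q else 0 := rfl

lemma rayL_step (hl0 : l ≠ 0) {hi t : ℤ} (c d : ℂ) (h1 : t + 1 ≤ hi) (h2 : t + 1 ≠ 0) :
    rayL l hi c d (t+1) = l * rayL l hi c d t := by
  by_cases h : 0 ≤ t
  · rw [rayL_pos _ _ h1 (by omega), rayL_pos _ _ (by omega) h, zpow_add_one₀ hl0]; ring
  · rw [rayL_neg _ _ h1 (by omega), rayL_neg _ _ (by omega) (by omega), zpow_add_one₀ hl0]; ring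

lemma rayR_step (hl0 : l ≠ 0) {lo mid t : ℤ} (c d : ℂ) (h1 : lo ≤ t - 1) (h2 : t - 1 ≠ mid) :
    rayR l lo mid c d (t-1) = l * rayR l lo mid c d t := by
  by_cases h : t ≤ mid
  · rw [rayR_pos _ _ h1 (by omega), rayR_pos _ _ (by omega) h,
      show -(t-1) = -t + 1 from by ring, zpow_add_one₀ hl0]; ring
  · rw [rayR_neg _ _ h1 (by omega), rayR_neg _ _ (by omega) (by omega),
      show -(t-1) = -t + 1 from by ring, zpow_add_one₀ hl0]; ring

end Aux3

section LineEval

variable {m n : ℤ} {C : Site → Matrix Chir Chir ℂ} {l : ℂ}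

lemma uP0_row0 (p : ℤ) : uP m n C l (p, 0) 0 = rayL l (m-1) 1 (C (0,0) 0 0) p := by
  rw [uP_app0', if_pos rfl]
lemma uP0_rown (hn : n ≠ 0) (p : ℤ) : uP m n C l (p, n) 0 =
    rayL l (-1) 0 (l ^ (-n) * (C (0,0) 3 0 * C (0,n) 0 3)) p := by
  rw [uP_app0', if_neg (by omega), if_pos rfl]
lemma uP0_off {q : ℤ} (h0 : q ≠ 0) (hq : q ≠ n) (p : ℤ) : uP m n C l (p, q) 0 = 0 := by
  rw [uP_app0', if_neg h0, if_neg hq]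
lemma uP1_rown (p : ℤ) : uP m n C l (p, n) 1 =
    rayR l 1 m (l ^ (-n) * (C (0,0) 3 0 * C (0,n) 1 3))
      (l ^ (-n) * (C (0,0) 3 0 * C (0,n) 1 3 * C (m,n) 1 1)) p := by
  rw [uP_app1', if_pos rfl]
lemma uP1_row0 (hn : n ≠ 0) (p : ℤ) : uP m n C l (p, 0) 1 =
    rayR l (m+1) 0 0
      (l ^ (-(2*n)) * (C (0,0) 3 0 * C (0,n) 1 3 * C (m,n) 2 1 * C (m,0) 1 2)) p := by
  rw [uP_app1', if_neg (by omega), if_pos rfl]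
lemma uP1_off {q : ℤ} (h0 : q ≠ 0) (hq : q ≠ n) (p : ℤ) : uP m n C l (p, q) 1 = 0 := by
  rw [uP_app1', if_neg hq, if_neg h0]
lemma uP2_colm (q : ℤ) : uP m n C l (m, q) 2 =
    rayL l (n-1) (l ^ (-(m+2*n)) * (C (0,0) 3 0 * C (0,n) 1 3 * C (m,n) 2 1))
      (l ^ (-(m+2*n)) * (C (0,0) 3 0 * C (0,n) 1 3 * C (m,n) 2 1 * C (m,0) 2 2)) q := by
  rw [uP_app2', if_pos rfl]
lemma uP2_col0 (hm : m ≠ 0) (q : ℤ) : uP m n C l (0, q) 2 =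
    rayL l (-1) 0 (C (0,0) 2 0) q := by
  rw [uP_app2', if_neg (by omega), if_pos rfl]
lemma uP2_off {p : ℤ} (h0 : p ≠ 0) (hp : p ≠ m) (q : ℤ) : uP m n C l (p, q) 2 = 0 := by
  rw [uP_app2', if_neg hp, if_neg h0]
lemma uP3_col0 (q : ℤ) : uP m n C l (0, q) 3 =
    rayR l 1 n (C (0,0) 3 0) (C (0,0) 3 0 * C (0,n) 3 3) q := by
  rw [uP_app3', if_pos rfl]
lemma uP3_colm (hm : m ≠ 0) (q : ℤ) : uP m n C l (m, q) 3 =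
    rayR l (n+1) 0 0 (l ^ (-m) * (C (0,0) 3 0 * C (0,n) 1 3 * C (m,n) 3 1)) q := by
  rw [uP_app3', if_neg (by omega), if_pos rfl]
lemma uP3_off {p : ℤ} (h0 : p ≠ 0) (hp : p ≠ m) (q : ℤ) : uP m n C l (p, q) 3 = 0 := by
  rw [uP_app3', if_neg h0, if_neg hp]

end LineEval
section Eigen

variable {m n : ℤ} {C : Site → Matrix Chir Chir ℂ} {l : ℂ}

lemma l_mul_ray (hl0 : l ≠ 0) (t : ℤ) (c : ℂ) : l * (l ^ t * c) = l ^ (t+1) * c := by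
  rw [zpow_add_one₀ hl0]; ring

theorem uP_eigen (hm : 1 ≤ m) (hn : 1 ≤ n) (hl0 : l ≠ 0)
    (hoff : ∀ z : Site, z ∉ corners m n → C z = 1)
    (hz1 : C ((0:ℤ),(0:ℤ)) 1 0 = 0) (hz2 : C ((m:ℤ),(0:ℤ)) 3 2 = 0)
    (hz3 : C ((m:ℤ),(n:ℤ)) 0 1 = 0) (hz4 : C ((0:ℤ),(n:ℤ)) 2 3 = 0)
    (hl : l ^ (2*(m+n)) = cPlus m n C) :
    ∀ x i, ptWalk C (uP m n C l) x i = l * uP m n C l x i := by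
  have hC1 : ∀ z : Site, z ≠ ((0:ℤ),(0:ℤ)) → z ≠ ((m:ℤ),(0:ℤ)) → z ≠ ((m:ℤ),(n:ℤ)) →
      z ≠ ((0:ℤ),(n:ℤ)) → C z = 1 := fun z a b c d => hoff z (not_corner z a b c d)
  have hl' : l ^ (2*(m+n)) = C ((0:ℤ),(0:ℤ)) 3 0 * C ((m:ℤ),(0:ℤ)) 0 2 *
      C ((m:ℤ),(n:ℤ)) 2 1 * C ((0:ℤ),(n:ℤ)) 1 3 := hl
  intro x i
  obtain ⟨p, q⟩ := x
  fin_cases i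
  · -- chirality 0 : ←
    rw [show (⟨0, by norm_num⟩ : Fin 4) = (0 : Fin 4) from rfl, ptWalk_app0]
    by_cases hq0 : q = 0
    · rw [hq0]
      by_cases h1 : p + 1 = 0
      · rw [h1, ptCoin_expand, uP_c00 hm hn, uP0_row0,
          rayL_neg _ _ (by omega) (by omega), show p = (-1:ℤ) from by omega,
          l_mul_ray hl0, show (-1:ℤ) + 1 = 0 from by norm_num, zpow_zero, one_mul]
        simp only [Matrix.cons_val_zero, Matrix.cons_val_one, Matrix.head_cons,
          Matrix.cons_val_two, Matrix.tail_cons, Matrix.cons_val_three,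
          mul_zero, add_zero, zero_add, mul_one]
      · by_cases h2 : p + 1 = m
        · rw [h2, ptCoin_expand, uP_cm0 hm hn, uP0_row0,
            rayL_pos _ _ (by omega) (by omega), show p = m - 1 from by omega,
            l_mul_ray hl0, show m - 1 + 1 = m from by ring]
          simp only [Matrix.cons_val_zero, Matrix.cons_val_one, Matrix.head_cons,
            Matrix.cons_val_two, Matrix.tail_cons, Matrix.cons_val_three,
            mul_zero, add_zero, zero_add, mul_one]
          have key : C ((0:ℤ),(0:ℤ)) 3 0 * C ((0:ℤ),(n:ℤ)) 1 3 * C ((m:ℤ),(n:ℤ)) 2 1 *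
              C ((m:ℤ),(0:ℤ)) 0 2 = l ^ (2*(m+n)) := by rw [hl']; ring
          have hcan : l ^ (2*(m+n)) * l ^ (-(m+2*n)) = l ^ (m:ℤ) := by
            rw [← zpow_add₀ hl0]; congr 1; ring
          linear_combination (l ^ (-(m+2*n)) : ℂ) * key + hcan
        · rw [ptCoin_one (hC1 (p+1, 0) (by simp [Prod.ext_iff]; omega)
            (by simp [Prod.ext_iff]; omega) (by simp [Prod.ext_iff]; omega)
            (by simp [Prod.ext_iff]; omega)), uP0_row0, uP0_row0]
          by_cases hin : p + 1 ≤ m - 1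
          · exact rayL_step hl0 _ _ hin h1
          · rw [rayL_zero _ _ (by omega), rayL_zero _ _ (by omega)]; ring
    · by_cases hqn : q = n
      · rw [hqn]
        by_cases h1 : p + 1 = 0
        · rw [h1, ptCoin_expand, uP_c0n hm hn, uP0_rown (by omega),
            rayL_neg _ _ (by omega) (by omega), show p = (-1:ℤ) from by omega,
            l_mul_ray hl0, show (-1:ℤ) + 1 = 0 from by norm_num, zpow_zero, one_mul]
          simp only [Matrix.cons_val_zero, Matrix.cons_val_one, Matrix.head_cons,
            Matrix.cons_val_two, Matrix.tail_cons, Matrix.cons_val_three,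
            mul_zero, add_zero, zero_add, mul_one]
          ring
        · by_cases h2 : p + 1 = m
          · rw [h2, ptCoin_expand, uP_cmn hm hn, uP0_rown (by omega),
              rayL_zero _ _ (by omega), hz3]
            simp only [Matrix.cons_val_zero, Matrix.cons_val_one, Matrix.head_cons,
              Matrix.cons_val_two, Matrix.tail_cons, Matrix.cons_val_three,
              mul_zero, add_zero, zero_add, mul_one, zero_mul]
          · rw [ptCoin_one (hC1 (p+1, n) (by simp [Prod.ext_iff]; omega)
              (by simp [Prod.ext_iff]; omega) (by simp [Prod.ext_iff]; omega)
              (by simp [Prod.ext_iff]; omega)), uP0_rown (by omega), uP0_rown (by omega)]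
            by_cases hin : p + 1 ≤ -1
            · exact rayL_step hl0 _ _ hin h1
            · rw [rayL_zero _ _ (by omega), rayL_zero _ _ (by omega)]; ring
      · rw [ptCoin_one (hC1 (p+1, q) (by simp [Prod.ext_iff]; omega)
          (by simp [Prod.ext_iff]; omega) (by simp [Prod.ext_iff]; omega)
          (by simp [Prod.ext_iff]; omega)), uP0_off hq0 hqn, uP0_off hq0 hqn]
        ring
  · -- chirality 1 : →
    rw [show (⟨1, by norm_num⟩ : Fin 4) = (1 : Fin 4) from rfl, ptWalk_app1]
    by_cases hqn : q = n
    · rw [hqn]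
      by_cases h1 : p - 1 = 0
      · rw [h1, ptCoin_expand, uP_c0n hm hn, uP1_rown,
          rayR_pos _ _ (by omega) (by omega), show p = (1:ℤ) from by omega,
          l_mul_ray hl0, show (-(1:ℤ)) + 1 = 0 from by norm_num, zpow_zero, one_mul]
        simp only [Matrix.cons_val_zero, Matrix.cons_val_one, Matrix.head_cons,
          Matrix.cons_val_two, Matrix.tail_cons, Matrix.cons_val_three,
          mul_zero, add_zero, zero_add, mul_one]
        ring
      · by_cases h2 : p - 1 = m
        · rw [h2, ptCoin_expand, uP_cmn hm hn, uP1_rown,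
            rayR_neg _ _ (by omega) (by omega), show p = m + 1 from by omega,
            l_mul_ray hl0, show -(m+1) + 1 = -m from by ring]
          simp only [Matrix.cons_val_zero, Matrix.cons_val_one, Matrix.head_cons,
            Matrix.cons_val_two, Matrix.tail_cons, Matrix.cons_val_three,
            mul_zero, add_zero, zero_add, mul_one]
          ring
        · rw [ptCoin_one (hC1 (p-1, n) (by simp [Prod.ext_iff]; omega)
            (by simp [Prod.ext_iff]; omega) (by simp [Prod.ext_iff]; omega)
            (by simp [Prod.ext_iff]; omega)), uP1_rown, uP1_rown]
          by_cases hin : 1 ≤ p - 1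
          · exact rayR_step hl0 _ _ hin h2
          · rw [rayR_zero _ _ (by omega), rayR_zero _ _ (by omega)]; ring
    · by_cases hq0 : q = 0
      · rw [hq0]
        by_cases h1 : p - 1 = 0
        · rw [h1, ptCoin_expand, uP_c00 hm hn, uP1_row0 (by omega),
            rayR_zero _ _ (by omega), hz1]
          simp only [Matrix.cons_val_zero, Matrix.cons_val_one, Matrix.head_cons,
            Matrix.cons_val_two, Matrix.tail_cons, Matrix.cons_val_three,
            mul_zero, add_zero, zero_add, mul_one, zero_mul]
        · by_cases h2 : p - 1 = m
          · rw [h2, ptCoin_expand, uP_cm0 hm hn, uP1_row0 (by omega),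
              rayR_neg _ _ (by omega) (by omega)]
            simp only [Matrix.cons_val_zero, Matrix.cons_val_one, Matrix.head_cons,
              Matrix.cons_val_two, Matrix.tail_cons, Matrix.cons_val_three,
              mul_zero, add_zero, zero_add, mul_one]
            rw [show p = m + 1 from by omega, l_mul_ray hl0,
              show -(m+1) + 1 = -m from by ring,
              show (-(m+2*n) : ℤ) = -m + -(2*n) from by ring, zpow_add₀ hl0]
            ring
          · rw [ptCoin_one (hC1 (p-1, 0) (by simp [Prod.ext_iff]; omega)
              (by simp [Prod.ext_iff]; omega) (by simp [Prod.ext_iff]; omega)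
              (by simp [Prod.ext_iff]; omega)), uP1_row0 (by omega), uP1_row0 (by omega)]
            by_cases hin : m + 1 ≤ p - 1
            · exact rayR_step hl0 _ _ hin (by omega)
            · rw [rayR_zero _ _ (by omega), rayR_zero _ _ (by omega)]; ring
      · rw [ptCoin_one (hC1 (p-1, q) (by simp [Prod.ext_iff]; omega)
          (by simp [Prod.ext_iff]; omega) (by simp [Prod.ext_iff]; omega)
          (by simp [Prod.ext_iff]; omega)), uP1_off hq0 hqn, uP1_off hq0 hqn]
        ring
  · -- chirality 2 : ↓
    rw [show (⟨2, by norm_num⟩ : Fin 4) = (2 : Fin 4) from rfl, ptWalk_app2]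
    by_cases hpm : p = m
    · rw [hpm]
      by_cases h1 : q + 1 = 0
      · rw [h1, ptCoin_expand, uP_cm0 hm hn, uP2_colm,
          rayL_neg _ _ (by omega) (by omega), show q = (-1:ℤ) from by omega,
          l_mul_ray hl0, show (-1:ℤ) + 1 = 0 from by norm_num, zpow_zero, one_mul]
        simp only [Matrix.cons_val_zero, Matrix.cons_val_one, Matrix.head_cons,
          Matrix.cons_val_two, Matrix.tail_cons, Matrix.cons_val_three,
          mul_zero, add_zero, zero_add, mul_one]
        ring
      · by_cases h2 : q + 1 = n
        · rw [h2, ptCoin_expand, uP_cmn hm hn, uP2_colm,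
            rayL_pos _ _ (by omega) (by omega), show q = n - 1 from by omega,
            l_mul_ray hl0, show n - 1 + 1 = n from by ring]
          simp only [Matrix.cons_val_zero, Matrix.cons_val_one, Matrix.head_cons,
            Matrix.cons_val_two, Matrix.tail_cons, Matrix.cons_val_three,
            mul_zero, add_zero, zero_add, mul_one]
          have hcan : l ^ (n:ℤ) * l ^ (-(m+2*n)) = l ^ (-m) * l ^ (-n) := by
            rw [← zpow_add₀ hl0, ← zpow_add₀ hl0]; congr 1; ring
          linear_combination (-(C ((0:ℤ),(0:ℤ)) 3 0 * C ((0:ℤ),(n:ℤ)) 1 3 *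
            C ((m:ℤ),(n:ℤ)) 2 1)) * hcan
        · rw [ptCoin_one (hC1 (m, q+1) (by simp [Prod.ext_iff]; omega)
            (by simp [Prod.ext_iff]; omega) (by simp [Prod.ext_iff]; omega)
            (by simp [Prod.ext_iff]; omega)), uP2_colm, uP2_colm]
          by_cases hin : q + 1 ≤ n - 1
          · exact rayL_step hl0 _ _ hin h1
          · rw [rayL_zero _ _ (by omega), rayL_zero _ _ (by omega)]; ring
    · by_cases hp0 : p = 0
      · rw [hp0]
        by_cases h1 : q + 1 = 0
        · rw [h1, ptCoin_expand, uP_c00 hm hn, uP2_col0 (by omega),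
            rayL_neg _ _ (by omega) (by omega), show q = (-1:ℤ) from by omega,
            l_mul_ray hl0, show (-1:ℤ) + 1 = 0 from by norm_num, zpow_zero, one_mul]
          simp only [Matrix.cons_val_zero, Matrix.cons_val_one, Matrix.head_cons,
            Matrix.cons_val_two, Matrix.tail_cons, Matrix.cons_val_three,
            mul_zero, add_zero, zero_add, mul_one]
        · by_cases h2 : q + 1 = n
          · rw [h2, ptCoin_expand, uP_c0n hm hn, uP2_col0 (by omega),
              rayL_zero _ _ (by omega), hz4]
            simp only [Matrix.cons_val_zero, Matrix.cons_val_one, Matrix.head_cons,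
              Matrix.cons_val_two, Matrix.tail_cons, Matrix.cons_val_three,
              mul_zero, add_zero, zero_add, mul_one, zero_mul]
          · rw [ptCoin_one (hC1 (0, q+1) (by simp [Prod.ext_iff]; omega)
              (by simp [Prod.ext_iff]; omega) (by simp [Prod.ext_iff]; omega)
              (by simp [Prod.ext_iff]; omega)), uP2_col0 (by omega), uP2_col0 (by omega)]
            by_cases hin : q + 1 ≤ -1
            · exact rayL_step hl0 _ _ hin h1
            · rw [rayL_zero _ _ (by omega), rayL_zero _ _ (by omega)]; ring
      · rw [ptCoin_one (hC1 (p, q+1) (by simp [Prod.ext_iff]; omega)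
          (by simp [Prod.ext_iff]; omega) (by simp [Prod.ext_iff]; omega)
          (by simp [Prod.ext_iff]; omega)), uP2_off hp0 hpm, uP2_off hp0 hpm]
        ring
  · -- chirality 3 : ↑
    rw [show (⟨3, by norm_num⟩ : Fin 4) = (3 : Fin 4) from rfl, ptWalk_app3]
    by_cases hp0 : p = 0
    · rw [hp0]
      by_cases h1 : q - 1 = 0
      · rw [h1, ptCoin_expand, uP_c00 hm hn, uP3_col0,
          rayR_pos _ _ (by omega) (by omega), show q = (1:ℤ) from by omega,
          l_mul_ray hl0, show (-(1:ℤ)) + 1 = 0 from by norm_num, zpow_zero, one_mul]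
        simp only [Matrix.cons_val_zero, Matrix.cons_val_one, Matrix.head_cons,
          Matrix.cons_val_two, Matrix.tail_cons, Matrix.cons_val_three,
          mul_zero, add_zero, zero_add, mul_one]
      · by_cases h2 : q - 1 = n
        · rw [h2, ptCoin_expand, uP_c0n hm hn, uP3_col0,
            rayR_neg _ _ (by omega) (by omega), show q = n + 1 from by omega,
            l_mul_ray hl0, show -(n+1) + 1 = -n from by ring]
          simp only [Matrix.cons_val_zero, Matrix.cons_val_one, Matrix.head_cons,
            Matrix.cons_val_two, Matrix.tail_cons, Matrix.cons_val_three,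
            mul_zero, add_zero, zero_add, mul_one]
          ring
        · rw [ptCoin_one (hC1 (0, q-1) (by simp [Prod.ext_iff]; omega)
            (by simp [Prod.ext_iff]; omega) (by simp [Prod.ext_iff]; omega)
            (by simp [Prod.ext_iff]; omega)), uP3_col0, uP3_col0]
          by_cases hin : 1 ≤ q - 1
          · exact rayR_step hl0 _ _ hin h2
          · rw [rayR_zero _ _ (by omega), rayR_zero _ _ (by omega)]; ring
    · by_cases hpm : p = m
      · rw [hpm]
        by_cases h1 : q - 1 = 0
        · rw [h1, ptCoin_expand, uP_cm0 hm hn, uP3_colm (by omega),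
            rayR_zero _ _ (by omega), hz2]
          simp only [Matrix.cons_val_zero, Matrix.cons_val_one, Matrix.head_cons,
            Matrix.cons_val_two, Matrix.tail_cons, Matrix.cons_val_three,
            mul_zero, add_zero, zero_add, mul_one, zero_mul]
        · by_cases h2 : q - 1 = n
          · rw [h2, ptCoin_expand, uP_cmn hm hn, uP3_colm (by omega),
              rayR_neg _ _ (by omega) (by omega), show q = n + 1 from by omega,
              l_mul_ray hl0, show -(n+1) + 1 = -n from by ring]
            simp only [Matrix.cons_val_zero, Matrix.cons_val_one, Matrix.head_cons,
              Matrix.cons_val_two, Matrix.tail_cons, Matrix.cons_val_three,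
              mul_zero, add_zero, zero_add, mul_one]
            ring
          · rw [ptCoin_one (hC1 (m, q-1) (by simp [Prod.ext_iff]; omega)
              (by simp [Prod.ext_iff]; omega) (by simp [Prod.ext_iff]; omega)
              (by simp [Prod.ext_iff]; omega)), uP3_colm (by omega), uP3_colm (by omega)]
            by_cases hin : n + 1 ≤ q - 1
            · exact rayR_step hl0 _ _ hin (by omega)
            · rw [rayR_zero _ _ (by omega), rayR_zero _ _ (by omega)]; ring
      · rw [ptCoin_one (hC1 (p, q-1) (by simp [Prod.ext_iff]; omega)
          (by simp [Prod.ext_iff]; omega) (by simp [Prod.ext_iff]; omega)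
          (by simp [Prod.ext_iff]; omega)), uP3_off hp0 hpm, uP3_off hp0 hpm]
        ring

end Eigen
section Transpose

/-- Transposition of the lattice. -/
def Tr (x : Site) : Site := (x.2, x.1)

/-- Chirality exchange `←↔↓`, `→↔↑`. -/
def sc : Chir → Chir := ![2, 3, 0, 1]

/-- Transposed coin. -/
def trCoin (C : Site → Matrix Chir Chir ℂ) : Site → Matrix Chir Chir ℂ :=
  fun x => Matrix.of fun i j => C (Tr x) (sc i) (sc j)

/-- Transposed state. -/
def trFun (u : Site → Chir → ℂ) : Site → Chir → ℂ := fun x i => u (Tr x) (sc i)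

lemma sc_sc (i : Chir) : sc (sc i) = i := by fin_cases i <;> rfl

lemma trCoin_trCoin (C : Site → Matrix Chir Chir ℂ) : trCoin (trCoin C) = C := by
  funext x
  ext i j
  simp only [trCoin, Matrix.of_apply, sc_sc]
  rfl

lemma ptCoin_tr (C : Site → Matrix Chir Chir ℂ) (u : Site → Chir → ℂ) (z : Site) (i : Chir) :
    ptCoin (trCoin C) (trFun u) z i = ptCoin C u (Tr z) (sc i) := by
  rw [ptCoin_expand, ptCoin_expand]
  show C (Tr z) (sc i) (sc 0) * u (Tr z) (sc 0) + C (Tr z) (sc i) (sc 1) * u (Tr z) (sc 1) +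
    C (Tr z) (sc i) (sc 2) * u (Tr z) (sc 2) + C (Tr z) (sc i) (sc 3) * u (Tr z) (sc 3) = _
  show C (Tr z) (sc i) 2 * u (Tr z) 2 + C (Tr z) (sc i) 3 * u (Tr z) 3 +
    C (Tr z) (sc i) 0 * u (Tr z) 0 + C (Tr z) (sc i) 1 * u (Tr z) 1 = _
  ring

lemma ptWalk_trFun {C : Site → Matrix Chir Chir ℂ} {u : Site → Chir → ℂ} {l : ℂ}
    (hu : ∀ x i, ptWalk C u x i = l * u x i) :
    ∀ x i, ptWalk (trCoin C) (trFun u) x i = l * trFun u x i := by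
  intro x i
  obtain ⟨p, q⟩ := x
  fin_cases i
  · rw [show (⟨0, by norm_num⟩ : Fin 4) = (0 : Fin 4) from rfl, ptWalk_app0, ptCoin_tr]
    have h := hu (q, p) 2
    rw [ptWalk_app2] at h
    exact h
  · rw [show (⟨1, by norm_num⟩ : Fin 4) = (1 : Fin 4) from rfl, ptWalk_app1, ptCoin_tr]
    have h := hu (q, p) 3
    rw [ptWalk_app3] at h
    exact h
  · rw [show (⟨2, by norm_num⟩ : Fin 4) = (2 : Fin 4) from rfl, ptWalk_app2, ptCoin_tr]
    have h := hu (q, p) 0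
    rw [ptWalk_app0] at h
    exact h
  · rw [show (⟨3, by norm_num⟩ : Fin 4) = (3 : Fin 4) from rfl, ptWalk_app3, ptCoin_tr]
    have h := hu (q, p) 1
    rw [ptWalk_app1] at h
    exact h

end Transpose
section Package

/-- Diagonal weights of `D_x(θ)`. -/
def dfac (θ : ℂ) (x : Site) : Chir → ℂ :=
  ![Complex.exp (Complex.I * θ * x.1), Complex.exp (-(Complex.I * θ * x.1)),
    Complex.exp (Complex.I * θ * x.2), Complex.exp (-(Complex.I * θ * x.2))]

lemma dfac_ne_zero (θ : ℂ) (x : Site) (i : Chir) : dfac θ x i ≠ 0 := by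
  fin_cases i <;> exact Complex.exp_ne_zero _

lemma Dmat_eq (θ : ℂ) (x : Site) : Dmat θ x = Matrix.diagonal (dfac θ x) := rfl

lemma transCoin_apply (θ : ℂ) (C : Site → Matrix Chir Chir ℂ) (x : Site) (i j : Chir) :
    transCoin θ C x i j = dfac θ x i * C x i j * (dfac θ x j)⁻¹ := by
  have h1 : Matrix.diagonal (dfac θ x) * Matrix.diagonal (fun j => (dfac θ x j)⁻¹) = 1 := by
    rw [Matrix.diagonal_mul_diagonal]
    have h2 : (fun i => dfac θ x i * (dfac θ x i)⁻¹) = fun _ => (1:ℂ) :=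
      funext fun j => mul_inv_cancel₀ (dfac_ne_zero θ x j)
    rw [h2, Matrix.diagonal_one]
  rw [transCoin, Dmat_eq, Matrix.inv_eq_right_inv h1, Matrix.mul_diagonal, Matrix.diagonal_mul]

/-- The translated profile, as a `ℂ⁴`-valued map. -/
def vfun (θ : ℂ) (u : Site → Chir → ℂ) : Site → V := fun x =>
  (WithLp.equiv 2 (Fin 4 → ℂ)).symm (fun i => dfac θ x i * u x i)

lemma vfun_apply (θ : ℂ) (u : Site → Chir → ℂ) (x : Site) (i : Chir) :
    vfun θ u x i = dfac θ x i * u x i := rfl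

lemma dfac_shift0 (θ : ℂ) (p q : ℤ) :
    dfac θ (p+1, q) 0 = Complex.exp (Complex.I * θ) * dfac θ (p, q) 0 := by
  show Complex.exp (Complex.I * θ * ((p+1 : ℤ) : ℂ)) = _ * Complex.exp (Complex.I * θ * (p : ℂ))
  rw [← Complex.exp_add]
  congr 1
  push_cast
  ring

lemma dfac_shift1 (θ : ℂ) (p q : ℤ) :
    dfac θ (p-1, q) 1 = Complex.exp (Complex.I * θ) * dfac θ (p, q) 1 := by
  show Complex.exp (-(Complex.I * θ * ((p-1 : ℤ) : ℂ))) =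
    _ * Complex.exp (-(Complex.I * θ * (p : ℂ)))
  rw [← Complex.exp_add]
  congr 1
  push_cast
  ring

lemma dfac_shift2 (θ : ℂ) (p q : ℤ) :
    dfac θ (p, q+1) 2 = Complex.exp (Complex.I * θ) * dfac θ (p, q) 2 := by
  show Complex.exp (Complex.I * θ * ((q+1 : ℤ) : ℂ)) = _ * Complex.exp (Complex.I * θ * (q : ℂ))
  rw [← Complex.exp_add]
  congr 1
  push_cast
  ring

lemma dfac_shift3 (θ : ℂ) (p q : ℤ) :
    dfac θ (p, q-1) 3 = Complex.exp (Complex.I * θ) * dfac θ (p, q) 3 := by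
  show Complex.exp (-(Complex.I * θ * ((q-1 : ℤ) : ℂ))) =
    _ * Complex.exp (-(Complex.I * θ * (q : ℂ)))
  rw [← Complex.exp_add]
  congr 1
  push_cast
  ring

theorem package {θ : ℂ} {C : Site → Matrix Chir Chir ℂ} {l : ℂ} {u : Site → Chir → ℂ}
    (heig : ∀ x i, ptWalk C u x i = l * u x i)
    (v : H) (hv : ∀ x i, v x i = dfac θ x i * u x i)
    (S : H →L[ℂ] H) (hS : IsShiftOp S) (Mθ : H →L[ℂ] H)
    (hM : IsCoinOp Mθ (transCoin θ C)) :
    transWalkOp θ S Mθ v = l • v := by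
  have hMc : ∀ (z : Site) (i : Chir), (Mθ v) z i = dfac θ z i * ptCoin C u z i := by
    intro z i
    rw [hM v z i, Fin.sum_univ_four, ptCoin_expand]
    simp only [transCoin_apply, hv]
    have e0 := dfac_ne_zero θ z 0
    have e1 := dfac_ne_zero θ z 1
    have e2 := dfac_ne_zero θ z 2
    have e3 := dfac_ne_zero θ z 3
    field_simp
  have hexp : Complex.exp (-(Complex.I * θ)) * Complex.exp (Complex.I * θ) = 1 := by
    rw [← Complex.exp_add]
    simp
  apply lp.ext
  funext x
  ext i
  obtain ⟨p, q⟩ := x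
  have smul_co : ∀ (c : ℂ) (f : H) (x : Site) (i : Chir), (c • f) x i = c * f x i := by
    intro c f x i
    rw [lp.coeFn_smul, Pi.smul_apply]
    rfl
  rw [transWalkOp, ContinuousLinearMap.smul_apply, smul_co, ContinuousLinearMap.comp_apply,
    smul_co]
  fin_cases i
  · rw [show (⟨0, by norm_num⟩ : Fin 4) = (0 : Fin 4) from rfl]
    rw [(hS (Mθ v) (p, q)).1, hMc, ← ptWalk_app0, heig, dfac_shift0]
    rw [hv (p,q) 0]
    calc Complex.exp (-(Complex.I * θ)) *
          (Complex.exp (Complex.I * θ) * dfac θ (p, q) 0 * (l * u (p,q) 0))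
        = (Complex.exp (-(Complex.I * θ)) * Complex.exp (Complex.I * θ)) *
          (dfac θ (p, q) 0 * (l * u (p,q) 0)) := by ring
      _ = l * (dfac θ (p, q) 0 * u (p,q) 0) := by rw [hexp]; ring
  · rw [show (⟨1, by norm_num⟩ : Fin 4) = (1 : Fin 4) from rfl]
    rw [(hS (Mθ v) (p, q)).2.1, hMc, ← ptWalk_app1, heig, dfac_shift1]
    rw [hv (p,q) 1]
    calc Complex.exp (-(Complex.I * θ)) *
          (Complex.exp (Complex.I * θ) * dfac θ (p, q) 1 * (l * u (p,q) 1))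
        = (Complex.exp (-(Complex.I * θ)) * Complex.exp (Complex.I * θ)) *
          (dfac θ (p, q) 1 * (l * u (p,q) 1)) := by ring
      _ = l * (dfac θ (p, q) 1 * u (p,q) 1) := by rw [hexp]; ring
  · rw [show (⟨2, by norm_num⟩ : Fin 4) = (2 : Fin 4) from rfl]
    rw [(hS (Mθ v) (p, q)).2.2.1, hMc, ← ptWalk_app2, heig, dfac_shift2]
    rw [hv (p,q) 2]
    calc Complex.exp (-(Complex.I * θ)) *
          (Complex.exp (Complex.I * θ) * dfac θ (p, q) 2 * (l * u (p,q) 2))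
        = (Complex.exp (-(Complex.I * θ)) * Complex.exp (Complex.I * θ)) *
          (dfac θ (p, q) 2 * (l * u (p,q) 2)) := by ring
      _ = l * (dfac θ (p, q) 2 * u (p,q) 2) := by rw [hexp]; ring
  · rw [show (⟨3, by norm_num⟩ : Fin 4) = (3 : Fin 4) from rfl]
    rw [(hS (Mθ v) (p, q)).2.2.2, hMc, ← ptWalk_app3, heig, dfac_shift3]
    rw [hv (p,q) 3]
    calc Complex.exp (-(Complex.I * θ)) *
          (Complex.exp (Complex.I * θ) * dfac θ (p, q) 3 * (l * u (p,q) 3))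
        = (Complex.exp (-(Complex.I * θ)) * Complex.exp (Complex.I * θ)) *
          (dfac θ (p, q) 3 * (l * u (p,q) 3)) := by ring
      _ = l * (dfac θ (p, q) 3 * u (p,q) 3) := by rw [hexp]; ring

end Package
section Summability

lemma real_exp_zpow (a : ℝ) (t : ℤ) : Real.exp (a * t) = (Real.exp a) ^ (t:ℤ) := by
  have h := Real.rpow_intCast (Real.exp a) t
  rw [← h, Real.rpow_def_of_pos (Real.exp_pos a), Real.log_exp]

lemma zpow_sq_comm (a : ℝ) (t : ℤ) : (a ^ (t:ℤ))^(2:ℕ) = (a^(2:ℕ)) ^ (t:ℤ) := by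
  rw [← zpow_natCast (a ^ (t:ℤ)) 2, ← zpow_mul, mul_comm, zpow_mul, zpow_natCast]

lemma summable_geom_shift (q K : ℝ) (h0 : 0 ≤ q) (hq : q < 1) (N : ℤ) (F : ℤ → ℝ)
    (hpos : ∀ t, 0 ≤ F t) (hz : ∀ t, N < t → F t = 0)
    (hb : ∀ t, t ≤ N → F t ≤ K * q ^ (N - t).toNat) : Summable F := by
  have hinj : Function.Injective (fun k : ℕ => N - k) := by
    intro a b h; simpa using h
  have hzero : ∀ t ∉ Set.range (fun k : ℕ => N - k), F t = 0 := by
    intro t ht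
    refine hz t ?_
    by_contra hc
    exact ht ⟨(N - t).toNat, by simp; omega⟩
  rw [← Function.Injective.summable_iff hinj hzero]
  apply Summable.of_nonneg_of_le (fun k => hpos _) (fun k => ?_)
    (((summable_geometric_of_lt_one h0 hq)).mul_left K)
  have := hb (N - k) (by omega)
  simpa using this

lemma summable_decay_L (ρ : ℝ) (hρ : 1 < ρ) (K : ℝ) (hK : 0 ≤ K) (N : ℤ) (F : ℤ → ℝ)
    (h0 : ∀ t, 0 ≤ F t) (hz : ∀ t, N < t → F t = 0)
    (hb : ∀ t, F t ≤ K * ρ ^ (t:ℤ)) : Summable F := by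
  have hρ0 : 0 < ρ := lt_trans one_pos hρ
  apply summable_geom_shift ρ⁻¹ (K * ρ ^ (N:ℤ)) (by positivity) (by
    rw [inv_lt_one_iff₀]; right; exact hρ) N F h0 hz
  intro t ht
  refine le_trans (hb t) (le_of_eq ?_)
  rw [mul_assoc]
  congr 1
  rw [← zpow_natCast ρ⁻¹ ((N-t).toNat), Int.toNat_of_nonneg (by omega), inv_zpow, ← zpow_neg,
    ← zpow_add₀ (ne_of_gt hρ0)]
  congr 1
  ring

lemma summable_decay_R (ρ : ℝ) (hρ : 1 < ρ) (K : ℝ) (hK : 0 ≤ K) (N : ℤ) (F : ℤ → ℝ)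
    (h0 : ∀ t, 0 ≤ F t) (hz : ∀ t, t < N → F t = 0)
    (hb : ∀ t, F t ≤ K * ρ ^ (-t:ℤ)) : Summable F := by
  have h : Summable (fun s : ℤ => F (-s)) := by
    apply summable_decay_L ρ hρ K hK (-N) _ (fun s => h0 _)
    · intro s hs
      exact hz _ (by omega)
    · intro s
      simpa using hb (-s)
  have he : (F ∘ ⇑(Equiv.neg ℤ)) = fun s : ℤ => F (-s) := rfl
  exact ((Equiv.neg ℤ).summable_iff (f := F)).mp (he ▸ h)

lemma abs_rayL_le (l : ℂ) (hi : ℤ) (c d : ℂ) (t : ℤ) :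
    Complex.abs (rayL l hi c d t) ≤
      Complex.abs l ^ (t:ℤ) * max (Complex.abs c) (Complex.abs d) := by
  rw [rayL]
  split_ifs with h1 h2
  · rw [map_mul, map_zpow₀]
    exact mul_le_mul_of_nonneg_left (le_max_left _ _) (by positivity)
  · rw [map_mul, map_zpow₀]
    exact mul_le_mul_of_nonneg_left (le_max_right _ _) (by positivity)
  · simp; positivity

lemma abs_rayR_le (l : ℂ) (lo mid : ℤ) (c d : ℂ) (t : ℤ) :
    Complex.abs (rayR l lo mid c d t) ≤
      Complex.abs l ^ (-t:ℤ) * max (Complex.abs c) (Complex.abs d) := by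
  rw [rayR]
  split_ifs with h1 h2
  · rw [map_mul, map_zpow₀]
    exact mul_le_mul_of_nonneg_left (le_max_left _ _) (by positivity)
  · rw [map_mul, map_zpow₀]
    exact mul_le_mul_of_nonneg_left (le_max_right _ _) (by positivity)
  · simp; positivity

lemma summable_line_L (θ : ℂ) (l : ℂ) (hi : ℤ) (c d : ℂ) (w : ℤ → ℂ)
    (hw : ∀ t, Complex.abs (w t) = Real.exp (-θ.im * t))
    (hρ : 1 < Real.exp (-θ.im) * Complex.abs l) :
    Summable (fun t : ℤ => Complex.abs (w t * rayL l hi c d t) ^ (2:ℕ)) := by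
  set ρ : ℝ := Real.exp (-θ.im) * Complex.abs l with hρdef
  set K0 : ℝ := max (Complex.abs c) (Complex.abs d) with hK0
  have hK00 : 0 ≤ K0 := le_trans (Complex.abs.nonneg c) (le_max_left _ _)
  apply summable_decay_L (ρ^(2:ℕ)) (one_lt_pow₀ hρ (by norm_num)) (K0^(2:ℕ)) (by positivity) hi
  · intro t; positivity
  · intro t ht
    rw [rayL_zero _ _ ht, mul_zero, map_zero]
    norm_num
  · intro t
    have habs : Complex.abs (w t * rayL l hi c d t) ≤ ρ ^ (t:ℤ) * K0 := by
      rw [map_mul, hw t, real_exp_zpow]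
      calc (Real.exp (-θ.im)) ^ (t:ℤ) * Complex.abs (rayL l hi c d t)
          ≤ (Real.exp (-θ.im)) ^ (t:ℤ) * (Complex.abs l ^ (t:ℤ) * K0) :=
            mul_le_mul_of_nonneg_left (abs_rayL_le l hi c d t)
              (le_of_lt (zpow_pos (Real.exp_pos _) t))
        _ = ρ ^ (t:ℤ) * K0 := by rw [hρdef, mul_zpow]; ring
    calc Complex.abs (w t * rayL l hi c d t) ^ (2:ℕ)
        ≤ (ρ ^ (t:ℤ) * K0) ^ (2:ℕ) := by
          apply pow_le_pow_left₀ (Complex.abs.nonneg _) habs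
      _ = K0^(2:ℕ) * (ρ^(2:ℕ)) ^ (t:ℤ) := by rw [mul_pow, zpow_sq_comm]; ring

lemma summable_line_R (θ : ℂ) (l : ℂ) (lo mid : ℤ) (c d : ℂ) (w : ℤ → ℂ)
    (hw : ∀ t, Complex.abs (w t) = Real.exp (θ.im * t))
    (hρ : 1 < Real.exp (-θ.im) * Complex.abs l) :
    Summable (fun t : ℤ => Complex.abs (w t * rayR l lo mid c d t) ^ (2:ℕ)) := by
  set ρ : ℝ := Real.exp (-θ.im) * Complex.abs l with hρdef
  set K0 : ℝ := max (Complex.abs c) (Complex.abs d) with hK0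
  have hK00 : 0 ≤ K0 := le_trans (Complex.abs.nonneg c) (le_max_left _ _)
  apply summable_decay_R (ρ^(2:ℕ)) (one_lt_pow₀ hρ (by norm_num)) (K0^(2:ℕ)) (by positivity) lo
  · intro t; positivity
  · intro t ht
    rw [rayR_zero _ _ ht, mul_zero, map_zero]
    norm_num
  · intro t
    have hwt : Complex.abs (w t) = (Real.exp (-θ.im)) ^ (-t:ℤ) := by
      rw [hw t, ← real_exp_zpow]
      congr 1
      push_cast
      ring
    have habs : Complex.abs (w t * rayR l lo mid c d t) ≤ ρ ^ (-t:ℤ) * K0 := by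
      rw [map_mul, hwt]
      calc (Real.exp (-θ.im)) ^ (-t:ℤ) * Complex.abs (rayR l lo mid c d t)
          ≤ (Real.exp (-θ.im)) ^ (-t:ℤ) * (Complex.abs l ^ (-t:ℤ) * K0) :=
            mul_le_mul_of_nonneg_left (abs_rayR_le l lo mid c d t)
              (le_of_lt (zpow_pos (Real.exp_pos _) _))
        _ = ρ ^ (-t:ℤ) * K0 := by rw [hρdef, mul_zpow]; ring
    calc Complex.abs (w t * rayR l lo mid c d t) ^ (2:ℕ)
        ≤ (ρ ^ (-t:ℤ) * K0) ^ (2:ℕ) := by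
          apply pow_le_pow_left₀ (Complex.abs.nonneg _) habs
      _ = K0^(2:ℕ) * (ρ^(2:ℕ)) ^ (-t:ℤ) := by rw [mul_pow, zpow_sq_comm]; ring

lemma summable_of_line_h (a : ℤ) (F : ℤ → ℝ) (hF : Summable F) :
    Summable (fun x : Site => if x.2 = a then F x.1 else 0) := by
  have hinj : Function.Injective (fun t : ℤ => ((t, a) : Site)) := by
    intro s t h; simpa [Prod.ext_iff] using h
  have hzero : ∀ x ∉ Set.range (fun t : ℤ => ((t, a) : Site)),
      (if x.2 = a then F x.1 else 0) = 0 := by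
    intro x hx
    rw [if_neg]
    intro h
    exact hx ⟨x.1, by rw [← h]⟩
  rw [← Function.Injective.summable_iff hinj hzero]
  have he : ((fun x : Site => if x.2 = a then F x.1 else 0) ∘ fun t : ℤ => ((t, a) : Site)) = F := by
    funext t; simp
  rw [he]
  exact hF

lemma summable_of_line_v (a : ℤ) (F : ℤ → ℝ) (hF : Summable F) :
    Summable (fun x : Site => if x.1 = a then F x.2 else 0) := by
  have hinj : Function.Injective (fun t : ℤ => ((a, t) : Site)) := by
    intro s t h; simpa [Prod.ext_iff] using h
  have hzero : ∀ x ∉ Set.range (fun t : ℤ => ((a, t) : Site)),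
      (if x.1 = a then F x.2 else 0) = 0 := by
    intro x hx
    rw [if_neg]
    intro h
    exact hx ⟨x.2, by rw [← h]⟩
  rw [← Function.Injective.summable_iff hinj hzero]
  have he : ((fun x : Site => if x.1 = a then F x.2 else 0) ∘ fun t : ℤ => ((a, t) : Site)) = F := by
    funext t; simp
  rw [he]
  exact hF

lemma summable_two_lines_h (f : Site → ℝ) (h0 : ∀ x, 0 ≤ f x) (a b : ℤ) (hab : a ≠ b)
    (hoff : ∀ x : Site, x.2 ≠ a → x.2 ≠ b → f x = 0)
    (ha : Summable (fun t : ℤ => f (t, a))) (hb : Summable (fun t : ℤ => f (t, b))) :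
    Summable f := by
  have hsplit : f = (fun x : Site => if x.2 = a then f (x.1, a) else 0) +
      (fun x : Site => if x.2 = b then f (x.1, b) else 0) := by
    funext x
    obtain ⟨p, q⟩ := x
    rcases eq_or_ne q a with h1 | h1
    · subst h1
      rw [Pi.add_apply, if_pos rfl, if_neg hab, add_zero]
    · rcases eq_or_ne q b with h2 | h2
      · subst h2
        rw [Pi.add_apply, if_neg h1, if_pos rfl, zero_add]
      · rw [Pi.add_apply, if_neg h1, if_neg h2, add_zero]
        exact hoff (p, q) h1 h2
  rw [hsplit]
  exact (summable_of_line_h a _ ha).add (summable_of_line_h b _ hb)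

lemma summable_two_lines_v (f : Site → ℝ) (h0 : ∀ x, 0 ≤ f x) (a b : ℤ) (hab : a ≠ b)
    (hoff : ∀ x : Site, x.1 ≠ a → x.1 ≠ b → f x = 0)
    (ha : Summable (fun t : ℤ => f (a, t))) (hb : Summable (fun t : ℤ => f (b, t))) :
    Summable f := by
  have hsplit : f = (fun x : Site => if x.1 = a then f (a, x.2) else 0) +
      (fun x : Site => if x.1 = b then f (b, x.2) else 0) := by
    funext x
    obtain ⟨p, q⟩ := x
    rcases eq_or_ne p a with h1 | h1
    · subst h1
      rw [Pi.add_apply, if_pos rfl, if_neg hab, add_zero]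
    · rcases eq_or_ne p b with h2 | h2
      · subst h2
        rw [Pi.add_apply, if_neg h1, if_pos rfl, zero_add]
      · rw [Pi.add_apply, if_neg h1, if_neg h2, add_zero]
        exact hoff (p, q) h1 h2
  rw [hsplit]
  exact (summable_of_line_v a _ ha).add (summable_of_line_v b _ hb)

end Summability
section MemLp

lemma dfac_abs0 (θ : ℂ) (p q : ℤ) : Complex.abs (dfac θ (p, q) 0) = Real.exp (-θ.im * p) := by
  show Complex.abs (Complex.exp (Complex.I * θ * (p:ℂ))) = _
  rw [Complex.abs_exp]
  congr 1
  simp [Complex.mul_re, Complex.mul_im]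

lemma dfac_abs1 (θ : ℂ) (p q : ℤ) : Complex.abs (dfac θ (p, q) 1) = Real.exp (θ.im * p) := by
  show Complex.abs (Complex.exp (-(Complex.I * θ * (p:ℂ)))) = _
  rw [Complex.abs_exp]
  congr 1
  simp [Complex.mul_re, Complex.mul_im]

lemma dfac_abs2 (θ : ℂ) (p q : ℤ) : Complex.abs (dfac θ (p, q) 2) = Real.exp (-θ.im * q) := by
  show Complex.abs (Complex.exp (Complex.I * θ * (q:ℂ))) = _
  rw [Complex.abs_exp]
  congr 1
  simp [Complex.mul_re, Complex.mul_im]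

lemma dfac_abs3 (θ : ℂ) (p q : ℤ) : Complex.abs (dfac θ (p, q) 3) = Real.exp (θ.im * q) := by
  show Complex.abs (Complex.exp (-(Complex.I * θ * (q:ℂ)))) = _
  rw [Complex.abs_exp]
  congr 1
  simp [Complex.mul_re, Complex.mul_im]

variable {m n : ℤ} {C : Site → Matrix Chir Chir ℂ} {l : ℂ}

theorem memlp_vP {θ : ℂ} (hm : 1 ≤ m) (hn : 1 ≤ n)
    (hρ : 1 < Real.exp (-θ.im) * Complex.abs l) :
    Memℓp (vfun θ (uP m n C l)) 2 := by
  apply memℓp_gen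
  have hkey : (fun x : Site => ‖vfun θ (uP m n C l) x‖ ^ (2:ENNReal).toReal) =
      fun x : Site => ((Complex.abs (vfun θ (uP m n C l) x 0))^(2:ℕ) +
        (Complex.abs (vfun θ (uP m n C l) x 1))^(2:ℕ)) +
        ((Complex.abs (vfun θ (uP m n C l) x 2))^(2:ℕ) +
        (Complex.abs (vfun θ (uP m n C l) x 3))^(2:ℕ)) := by
    funext x
    rw [show ((2:ENNReal).toReal) = ((2:ℕ):ℝ) from rfl, Real.rpow_natCast,
      EuclideanSpace.norm_eq,
      Real.sq_sqrt (Finset.sum_nonneg fun i _ => sq_nonneg _), Fin.sum_univ_four]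
    simp only [Complex.norm_eq_abs]
    ring
  rw [hkey]
  apply Summable.add
  · apply Summable.add
    · -- chirality 0
      apply summable_two_lines_h _ (fun x => by positivity) 0 n (by omega)
      · intro x h0 hn'
        obtain ⟨p, q⟩ := x
        rw [vfun_apply, uP0_off h0 hn', mul_zero, map_zero]
        norm_num
      · have hsum := summable_line_L θ l (m-1) 1 (C (0,0) 0 0)
          (fun t => dfac θ (t, 0) 0) (fun t => dfac_abs0 θ t 0) hρ
        have he : (fun t : ℤ => Complex.abs (vfun θ (uP m n C l) (t, 0) 0) ^ (2:ℕ)) =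
            fun t : ℤ => Complex.abs ((fun t : ℤ => dfac θ (t, 0) 0) t *
              rayL l (m-1) 1 (C (0,0) 0 0) t) ^ (2:ℕ) := by
          funext t; rw [vfun_apply, uP0_row0]
        rw [he]; exact hsum
      · have hsum := summable_line_L θ l (-1) 0 (l ^ (-n) * (C (0,0) 3 0 * C (0,n) 0 3))
          (fun t => dfac θ (t, n) 0) (fun t => dfac_abs0 θ t n) hρ
        have he : (fun t : ℤ => Complex.abs (vfun θ (uP m n C l) (t, n) 0) ^ (2:ℕ)) =
            fun t : ℤ => Complex.abs ((fun t : ℤ => dfac θ (t, n) 0) t *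
              rayL l (-1) 0 (l ^ (-n) * (C (0,0) 3 0 * C (0,n) 0 3)) t) ^ (2:ℕ) := by
          funext t; rw [vfun_apply, uP0_rown (by omega)]
        rw [he]; exact hsum
    · -- chirality 1
      apply summable_two_lines_h _ (fun x => by positivity) 0 n (by omega)
      · intro x h0 hn'
        obtain ⟨p, q⟩ := x
        rw [vfun_apply, uP1_off h0 hn', mul_zero, map_zero]
        norm_num
      · have hsum := summable_line_R θ l (m+1) 0 0
          (l ^ (-(2*n)) * (C (0,0) 3 0 * C (0,n) 1 3 * C (m,n) 2 1 * C (m,0) 1 2))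
          (fun t => dfac θ (t, 0) 1) (fun t => dfac_abs1 θ t 0) hρ
        have he : (fun t : ℤ => Complex.abs (vfun θ (uP m n C l) (t, 0) 1) ^ (2:ℕ)) =
            fun t : ℤ => Complex.abs ((fun t : ℤ => dfac θ (t, 0) 1) t *
              rayR l (m+1) 0 0
                (l ^ (-(2*n)) * (C (0,0) 3 0 * C (0,n) 1 3 * C (m,n) 2 1 * C (m,0) 1 2)) t)
              ^ (2:ℕ) := by
          funext t; rw [vfun_apply, uP1_row0 (by omega)]
        rw [he]; exact hsum
      · have hsum := summable_line_R θ l 1 m (l ^ (-n) * (C (0,0) 3 0 * C (0,n) 1 3))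
          (l ^ (-n) * (C (0,0) 3 0 * C (0,n) 1 3 * C (m,n) 1 1))
          (fun t => dfac θ (t, n) 1) (fun t => dfac_abs1 θ t n) hρ
        have he : (fun t : ℤ => Complex.abs (vfun θ (uP m n C l) (t, n) 1) ^ (2:ℕ)) =
            fun t : ℤ => Complex.abs ((fun t : ℤ => dfac θ (t, n) 1) t *
              rayR l 1 m (l ^ (-n) * (C (0,0) 3 0 * C (0,n) 1 3))
                (l ^ (-n) * (C (0,0) 3 0 * C (0,n) 1 3 * C (m,n) 1 1)) t) ^ (2:ℕ) := by
          funext t; rw [vfun_apply, uP1_rown]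
        rw [he]; exact hsum
  · apply Summable.add
    · -- chirality 2
      apply summable_two_lines_v _ (fun x => by positivity) 0 m (by omega)
      · intro x h0 hm'
        obtain ⟨p, q⟩ := x
        rw [vfun_apply, uP2_off h0 hm', mul_zero, map_zero]
        norm_num
      · have hsum := summable_line_L θ l (-1) 0 (C (0,0) 2 0)
          (fun t => dfac θ (0, t) 2) (fun t => dfac_abs2 θ 0 t) hρ
        have he : (fun t : ℤ => Complex.abs (vfun θ (uP m n C l) (0, t) 2) ^ (2:ℕ)) =
            fun t : ℤ => Complex.abs ((fun t : ℤ => dfac θ (0, t) 2) t *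
              rayL l (-1) 0 (C (0,0) 2 0) t) ^ (2:ℕ) := by
          funext t; rw [vfun_apply, uP2_col0 (by omega)]
        rw [he]; exact hsum
      · have hsum := summable_line_L θ l (n-1)
          (l ^ (-(m+2*n)) * (C (0,0) 3 0 * C (0,n) 1 3 * C (m,n) 2 1))
          (l ^ (-(m+2*n)) * (C (0,0) 3 0 * C (0,n) 1 3 * C (m,n) 2 1 * C (m,0) 2 2))
          (fun t => dfac θ (m, t) 2) (fun t => dfac_abs2 θ m t) hρ
        have he : (fun t : ℤ => Complex.abs (vfun θ (uP m n C l) (m, t) 2) ^ (2:ℕ)) =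
            fun t : ℤ => Complex.abs ((fun t : ℤ => dfac θ (m, t) 2) t *
              rayL l (n-1) (l ^ (-(m+2*n)) * (C (0,0) 3 0 * C (0,n) 1 3 * C (m,n) 2 1))
                (l ^ (-(m+2*n)) * (C (0,0) 3 0 * C (0,n) 1 3 * C (m,n) 2 1 * C (m,0) 2 2)) t)
              ^ (2:ℕ) := by
          funext t; rw [vfun_apply, uP2_colm]
        rw [he]; exact hsum
    · -- chirality 3
      apply summable_two_lines_v _ (fun x => by positivity) 0 m (by omega)
      · intro x h0 hm'
        obtain ⟨p, q⟩ := x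
        rw [vfun_apply, uP3_off h0 hm', mul_zero, map_zero]
        norm_num
      · have hsum := summable_line_R θ l 1 n (C (0,0) 3 0) (C (0,0) 3 0 * C (0,n) 3 3)
          (fun t => dfac θ (0, t) 3) (fun t => dfac_abs3 θ 0 t) hρ
        have he : (fun t : ℤ => Complex.abs (vfun θ (uP m n C l) (0, t) 3) ^ (2:ℕ)) =
            fun t : ℤ => Complex.abs ((fun t : ℤ => dfac θ (0, t) 3) t *
              rayR l 1 n (C (0,0) 3 0) (C (0,0) 3 0 * C (0,n) 3 3) t) ^ (2:ℕ) := by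
          funext t; rw [vfun_apply, uP3_col0]
        rw [he]; exact hsum
      · have hsum := summable_line_R θ l (n+1) 0 0
          (l ^ (-m) * (C (0,0) 3 0 * C (0,n) 1 3 * C (m,n) 3 1))
          (fun t => dfac θ (m, t) 3) (fun t => dfac_abs3 θ m t) hρ
        have he : (fun t : ℤ => Complex.abs (vfun θ (uP m n C l) (m, t) 3) ^ (2:ℕ)) =
            fun t : ℤ => Complex.abs ((fun t : ℤ => dfac θ (m, t) 3) t *
              rayR l (n+1) 0 0 (l ^ (-m) * (C (0,0) 3 0 * C (0,n) 1 3 * C (m,n) 3 1)) t)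
              ^ (2:ℕ) := by
          funext t; rw [vfun_apply, uP3_colm (by omega)]
        rw [he]; exact hsum

lemma dfac_tr (θ : ℂ) (x : Site) (i : Chir) : dfac θ x i = dfac θ (Tr x) (sc i) := by
  obtain ⟨p, q⟩ := x
  fin_cases i <;> rfl

lemma memlp_trFun {θ : ℂ} {u : Site → Chir → ℂ} (h : Memℓp (vfun θ u) 2) :
    Memℓp (vfun θ (trFun u)) 2 := by
  apply memℓp_gen
  have hs : Summable (fun x : Site => ‖vfun θ u x‖ ^ (2:ENNReal).toReal) :=
    (memℓp_gen_iff (by norm_num)).mp h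
  have hnorm : ∀ x : Site, ‖vfun θ (trFun u) x‖ = ‖vfun θ u (Tr x)‖ := by
    intro x
    rw [EuclideanSpace.norm_eq, EuclideanSpace.norm_eq]
    congr 1
    rw [Fin.sum_univ_four, Fin.sum_univ_four]
    have e : ∀ i : Chir, vfun θ (trFun u) x i = vfun θ u (Tr x) (sc i) := by
      intro i
      rw [vfun_apply, vfun_apply, dfac_tr θ x i]
      rfl
    rw [e 0, e 1, e 2, e 3, show sc 0 = 2 from rfl, show sc 1 = 3 from rfl,
      show sc 2 = 0 from rfl, show sc 3 = 1 from rfl]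
    ring
  have he : (fun x : Site => ‖vfun θ (trFun u) x‖ ^ (2:ENNReal).toReal) =
      ((fun x : Site => ‖vfun θ u x‖ ^ (2:ENNReal).toReal) ∘ ⇑(Equiv.prodComm ℤ ℤ)) := by
    funext x
    rw [hnorm]
    rfl
  rw [he]
  exact ((Equiv.prodComm ℤ ℤ).summable_iff).mpr hs

end MemLp
section MainHelpers

lemma unitary_entry_le {A : Matrix Chir Chir ℂ} (hA : A ∈ Matrix.unitaryGroup Chir ℂ)
    (i j : Chir) : Complex.abs (A i j) ≤ 1 := by
  have h : star A * A = 1 := hA.1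
  have h1 : (star A * A) j j = (1 : Matrix Chir Chir ℂ) j j := by rw [h]
  rw [Matrix.mul_apply, Matrix.one_apply_eq] at h1
  have h2 : (∑ k : Chir, ((Complex.normSq (A k j) : ℝ) : ℂ)) = 1 := by
    rw [← h1]
    refine Finset.sum_congr rfl fun k _ => ?_
    rw [Matrix.star_apply, RCLike.star_def, ← Complex.normSq_eq_conj_mul_self]
  have h3 : (∑ k : Chir, Complex.normSq (A k j)) = 1 := by
    have := congrArg Complex.re h2
    simpa using this
  have h4 : Complex.normSq (A i j) ≤ 1 := by
    rw [← h3]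
    exact Finset.single_le_sum (f := fun k => Complex.normSq (A k j))
      (fun k _ => Complex.normSq_nonneg _) (Finset.mem_univ i)
  calc Complex.abs (A i j) = Real.sqrt (Complex.normSq (A i j)) := Complex.abs_apply
    _ ≤ Real.sqrt 1 := Real.sqrt_le_sqrt h4
    _ = 1 := Real.sqrt_one

lemma prod4_close {a b c d : ℂ} {ε : ℝ}
    (hb1 : Complex.abs b ≤ 1) (hc1 : Complex.abs c ≤ 1) (hd1 : Complex.abs d ≤ 1)
    (ha : Complex.abs (a-1) < ε) (hb : Complex.abs (b-1) < ε)
    (hc : Complex.abs (c-1) < ε) (hd : Complex.abs (d-1) < ε) :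
    Complex.abs (a*b*c*d - 1) < 4*ε := by
  have key : a*b*c*d - 1 = (a-1)*(b*(c*d)) + ((b-1)*(c*d) + ((c-1)*d + (d-1))) := by ring
  have hcd : Complex.abs (c*d) ≤ 1 := by
    rw [map_mul]
    exact mul_le_one₀ hc1 (Complex.abs.nonneg d) hd1
  have hbcd : Complex.abs (b*(c*d)) ≤ 1 := by
    rw [map_mul]
    exact mul_le_one₀ hb1 (Complex.abs.nonneg _) hcd
  have h1 : Complex.abs ((a-1)*(b*(c*d))) ≤ Complex.abs (a-1) := by
    rw [map_mul]
    nlinarith [Complex.abs.nonneg (a-1), Complex.abs.nonneg (b*(c*d))]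
  have h2 : Complex.abs ((b-1)*(c*d)) ≤ Complex.abs (b-1) := by
    rw [map_mul]
    nlinarith [Complex.abs.nonneg (b-1), Complex.abs.nonneg (c*d)]
  have h3 : Complex.abs ((c-1)*d) ≤ Complex.abs (c-1) := by
    rw [map_mul]
    nlinarith [Complex.abs.nonneg (c-1), Complex.abs.nonneg d]
  have A1 := Complex.abs.add_le ((a-1)*(b*(c*d))) ((b-1)*(c*d) + ((c-1)*d + (d-1)))
  have A2 := Complex.abs.add_le ((b-1)*(c*d)) ((c-1)*d + (d-1))
  have A3 := Complex.abs.add_le ((c-1)*d) (d-1)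
  rw [key]
  linarith

lemma log_close {z : ℂ} (h : Complex.abs (z - 1) ≤ 1/2) :
    Complex.abs (Complex.log z) ≤ 3/2 * Complex.abs (z-1) := by
  have h' := Complex.norm_log_one_add_half_le_self (z := z - 1)
    (by simpa [Complex.norm_eq_abs] using h)
  have e : (1:ℂ) + (z - 1) = z := by ring
  rw [e] at h'
  simpa [Complex.norm_eq_abs] using h'

lemma fcc_entry1 {m n : ℤ} (hm : 1 ≤ m) (hn : 1 ≤ n) :
    fourCornerCoin m n ((0:ℤ),(0:ℤ)) 3 0 = 1 ∧ fourCornerCoin m n ((0:ℤ),(0:ℤ)) 1 2 = 1 := by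
  rw [fourCornerCoin, if_pos rfl]
  constructor <;> rfl

lemma fcc_entry2 {m n : ℤ} (hm : 1 ≤ m) (hn : 1 ≤ n) :
    fourCornerCoin m n ((m:ℤ),(0:ℤ)) 0 2 = 1 ∧ fourCornerCoin m n ((m:ℤ),(0:ℤ)) 3 1 = 1 := by
  rw [fourCornerCoin, if_neg (by simp [Prod.ext_iff]; omega), if_pos rfl]
  constructor <;> rfl

lemma fcc_entry3 {m n : ℤ} (hm : 1 ≤ m) (hn : 1 ≤ n) :
    fourCornerCoin m n ((m:ℤ),(n:ℤ)) 2 1 = 1 ∧ fourCornerCoin m n ((m:ℤ),(n:ℤ)) 0 3 = 1 := by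
  rw [fourCornerCoin, if_neg (by simp [Prod.ext_iff]; omega),
    if_neg (by simp [Prod.ext_iff]; omega), if_pos rfl]
  constructor <;> rfl

lemma fcc_entry4 {m n : ℤ} (hm : 1 ≤ m) (hn : 1 ≤ n) :
    fourCornerCoin m n ((0:ℤ),(n:ℤ)) 1 3 = 1 ∧ fourCornerCoin m n ((0:ℤ),(n:ℤ)) 2 0 = 1 := by
  rw [fourCornerCoin, if_neg (by simp [Prod.ext_iff]; omega),
    if_neg (by simp [Prod.ext_iff]; omega), if_neg (by simp [Prod.ext_iff]; omega), if_pos rfl]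
  constructor <;> rfl

lemma trCoin_eq_one {C : Site → Matrix Chir Chir ℂ} {z : Site} (h : C (Tr z) = 1) :
    trCoin C z = 1 := by
  ext i j
  rw [trCoin, Matrix.of_apply, h]
  fin_cases i <;> fin_cases j <;> simp [sc, Matrix.one_apply]

lemma corners_tr {m n : ℤ} (z : Site) (h : z ∉ corners n m) : Tr z ∉ corners m n := by
  obtain ⟨p, q⟩ := z
  simp only [corners, Set.mem_insert_iff, Set.mem_singleton_iff, Prod.ext_iff, Tr] at h ⊢
  tauto

end MainHelpers
section Kappa

lemma kappa_construct (m n : ℤ) (hm : 1 ≤ m) (hn : 1 ≤ n) (θ : ℂ) (hθ : θ.im < 0)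
    (ε : ℝ) (hε0 : 0 < ε) (hεθ : ε ≤ -θ.im/100) (hεs : ε ≤ 1/100)
    (k : ℕ) (c : ℂ) (hc : Complex.abs (c - 1) < 4*ε) :
    ∃ κ : ℂ, θ.im < κ.im ∧
      Complex.abs (κ - (Real.pi:ℂ) * (k:ℂ) / ((m:ℂ) + (n:ℂ)) - 2*(Real.pi:ℂ)*((0:ℤ):ℂ)) <
        8*ε ∧
      Complex.exp (-(Complex.I * κ)) ^ (2*(m+n) : ℤ) = c ∧
      1 < Real.exp (-θ.im) * Complex.abs (Complex.exp (-(Complex.I * κ))) := by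
  have hMN0 : ((m:ℂ) + n) ≠ 0 := by
    have h : ((m+n : ℤ):ℂ) ≠ 0 := Int.cast_ne_zero.mpr (by omega)
    push_cast at h
    exact h
  have hL0 : ((2*(m+n) : ℤ):ℂ) ≠ 0 := Int.cast_ne_zero.mpr (by omega)
  have hLpos : (0:ℝ) < ((2*(m+n) : ℤ):ℝ) := by exact_mod_cast (by omega : (0:ℤ) < 2*(m+n))
  have hL1 : (1:ℝ) ≤ ((2*(m+n) : ℤ):ℝ) := by exact_mod_cast (by omega : (1:ℤ) ≤ 2*(m+n))
  have hc12 : Complex.abs (c - 1) ≤ 1/2 := by linarith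
  have hc0 : c ≠ 0 := by
    intro h
    rw [h] at hc12
    simp at hc12
    linarith
  set w := Complex.log c with hwdef
  have hwb : Complex.abs w ≤ 3/2 * Complex.abs (c-1) := log_close hc12
  have hw6 : Complex.abs w < 6*ε := by linarith
  set κ : ℂ := (Real.pi:ℂ) * (k:ℂ) / ((m:ℂ) + (n:ℂ)) + Complex.I * w / ((2*(m+n):ℤ):ℂ)
    with hκ
  have hcast : ((2*(m+n):ℤ):ℂ) = (((2*(m+n):ℤ):ℝ):ℂ) := by push_cast; ring
  have hreal : (Real.pi:ℂ) * (k:ℂ) / ((m:ℂ) + (n:ℂ)) =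
      ((Real.pi * k / ((m:ℝ)+(n:ℝ)) : ℝ) : ℂ) := by push_cast; ring
  have him : κ.im = w.re / ((2*(m+n):ℤ):ℝ) := by
    rw [hκ, Complex.add_im, hreal, Complex.ofReal_im, zero_add, hcast,
      Complex.div_ofReal_im]
    congr 1
    simp [Complex.mul_im]
  have hre_le := Complex.abs_re_le_abs w
  have him_lb : -(6*ε) ≤ κ.im := by
    rw [him]
    rw [le_div_iff₀ hLpos]
    nlinarith [neg_abs_le w.re]
  have hgoal1 : θ.im < κ.im := by nlinarith
  refine ⟨κ, hgoal1, ?_, ?_, ?_⟩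
  · have hdiff : κ - (Real.pi:ℂ) * (k:ℂ) / ((m:ℂ) + (n:ℂ)) - 2*(Real.pi:ℂ)*((0:ℤ):ℂ) =
        Complex.I * w / ((2*(m+n):ℤ):ℂ) := by
      rw [hκ]
      push_cast
      ring
    rw [hdiff, map_div₀, map_mul, Complex.abs_I, one_mul, Complex.abs_intCast]
    rw [abs_of_pos (by exact_mod_cast (by omega : (0:ℤ) < 2*(m+n)))]
    calc Complex.abs w / ((2*(m+n):ℤ):ℝ) ≤ Complex.abs w :=
          div_le_self (Complex.abs.nonneg w) hL1
      _ < 8*ε := by linarith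
  · have e1 : ((2*(m+n):ℤ):ℂ) * ((Real.pi:ℂ) * (k:ℂ) / ((m:ℂ)+(n:ℂ))) =
        2*(Real.pi:ℂ)*(k:ℂ) := by
      push_cast
      field_simp
    have e2 : ((2*(m+n):ℤ):ℂ) * (Complex.I * w / ((2*(m+n):ℤ):ℂ)) = Complex.I * w := by
      field_simp
    have harith : ((2*(m+n):ℤ):ℂ) * (-(Complex.I * κ)) =
        w + (Int.cast (-(k:ℤ)) : ℂ) * (2*(Real.pi:ℂ)*Complex.I) := by
      have expand : ((2*(m+n):ℤ):ℂ) * (-(Complex.I * κ)) =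
          -(Complex.I * (((2*(m+n):ℤ):ℂ) * ((Real.pi:ℂ) * (k:ℂ) / ((m:ℂ)+(n:ℂ))) +
            ((2*(m+n):ℤ):ℂ) * (Complex.I * w / ((2*(m+n):ℤ):ℂ)))) := by
        rw [hκ]; ring
      rw [expand, e1, e2]
      push_cast
      linear_combination (-w) * Complex.I_mul_I
    calc Complex.exp (-(Complex.I * κ)) ^ (2*(m+n) : ℤ)
        = Complex.exp (((2*(m+n):ℤ):ℂ) * (-(Complex.I * κ))) :=
          (Complex.exp_int_mul _ _).symm
      _ = Complex.exp w * Complex.exp ((Int.cast (-(k:ℤ)) : ℂ) * (2*(Real.pi:ℂ)*Complex.I)) := by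
          rw [harith, Complex.exp_add]
      _ = c := by
          rw [Complex.exp_int_mul_two_pi_mul_I, hwdef, Complex.exp_log hc0, mul_one]
  · have habsl : Complex.abs (Complex.exp (-(Complex.I * κ))) = Real.exp (κ.im) := by
      rw [Complex.abs_exp]
      congr 1
      simp [Complex.mul_re]
    rw [habsl, ← Real.exp_add, ← Real.exp_zero]
    exact Real.exp_lt_exp.mpr (by linarith)

end Kappa
/-- stability of the eigenvalues of the conjugated operator `U_ε(θ)` for a family
of perturbed four-corner quantum walks: for small `ε` there are eigenvalues `e^{−iκ^±_{k,ε}}`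
with `κ^±_{k,ε}` within `rε` (mod `2π`) of `πk/(m₀+n₀)`. -/
theorem fourCorner_translated_eigenvalue_stability
    (m₀ n₀ : ℤ) (hm : 1 ≤ m₀) (hn : 1 ≤ n₀)
    (Cfam : ℝ → Site → Matrix Chir Chir ℂ)
    (hfam : ∀ ε : ℝ, 0 < ε → ε ≤ 1 → IsPerturbedFourCorner m₀ n₀ ε (Cfam ε))
    (θ : ℂ) (hθ : θ.im < 0)
    (S : H →L[ℂ] H) (hS : IsShiftOp S)
    (Mfam : ℝ → (H →L[ℂ] H))
    (hMfam : ∀ ε : ℝ, 0 < ε → ε ≤ 1 → IsCoinOp (Mfam ε) (transCoin θ (Cfam ε))) :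
    ∃ ε₀ r : ℝ, 0 < ε₀ ∧ ε₀ ≤ 1 ∧ 0 < r ∧
      ∀ ε : ℝ, 0 < ε → ε ≤ ε₀ → ∀ k : ℕ, (k : ℤ) < 2 * (m₀ + n₀) →
        ∃ κp κm : ℂ, θ.im < κp.im ∧ θ.im < κm.im ∧
          (∃ n : ℤ, ‖κp - (Real.pi : ℂ) * (k : ℂ) / ((m₀ : ℂ) + (n₀ : ℂ))
            - 2 * (Real.pi : ℂ) * (n : ℂ)‖ < r * ε) ∧
          (∃ n : ℤ, ‖κm - (Real.pi : ℂ) * (k : ℂ) / ((m₀ : ℂ) + (n₀ : ℂ))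
            - 2 * (Real.pi : ℂ) * (n : ℂ)‖ < r * ε) ∧
          (∃ u : H, u ≠ 0 ∧
            (transWalkOp θ S (Mfam ε)) u = Complex.exp (-(Complex.I * κp)) • u) ∧
          (∃ u : H, u ≠ 0 ∧
            (transWalkOp θ S (Mfam ε)) u = Complex.exp (-(Complex.I * κm)) • u) := by
  refine ⟨min 1 (min (1/100) (-θ.im/100)), 8, ?_, min_le_left _ _, by norm_num, ?_⟩
  · apply lt_min one_pos
    apply lt_min (by norm_num)
    linarith
  intro ε hε0 hεε₀ k _
  have hε1 : ε ≤ 1 := le_trans hεε₀ (min_le_left _ _)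
  have hεs : ε ≤ 1/100 := le_trans hεε₀ (le_trans (min_le_right _ _) (min_le_left _ _))
  have hεθ : ε ≤ -θ.im/100 := le_trans hεε₀ (le_trans (min_le_right _ _) (min_le_right _ _))
  obtain ⟨hCu, hCoff, hCnear, z1, z2, z3, z4, z5, z6, z7, z8⟩ := hfam ε hε0 hε1
  set C := Cfam ε with hCdef
  have hle : ∀ (x : Site) (i j : Chir), Complex.abs (C x i j) ≤ 1 :=
    fun x i j => unitary_entry_le (hCu x) i j
  have hin1 : ((0:ℤ),(0:ℤ)) ∈ corners m₀ n₀ := by simp [corners]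
  have hin2 : ((m₀:ℤ),(0:ℤ)) ∈ corners m₀ n₀ := by simp [corners]
  have hin3 : ((m₀:ℤ),(n₀:ℤ)) ∈ corners m₀ n₀ := by simp [corners]
  have hin4 : ((0:ℤ),(n₀:ℤ)) ∈ corners m₀ n₀ := by simp [corners]
  have na0 : Complex.abs (C ((0:ℤ),(0:ℤ)) 3 0 - 1) < ε := by
    have h := hCnear _ hin1 3 0
    rwa [(fcc_entry1 hm hn).1, Complex.norm_eq_abs] at h
  have na1 : Complex.abs (C ((m₀:ℤ),(0:ℤ)) 0 2 - 1) < ε := by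
    have h := hCnear _ hin2 0 2
    rwa [(fcc_entry2 hm hn).1, Complex.norm_eq_abs] at h
  have na2 : Complex.abs (C ((m₀:ℤ),(n₀:ℤ)) 2 1 - 1) < ε := by
    have h := hCnear _ hin3 2 1
    rwa [(fcc_entry3 hm hn).1, Complex.norm_eq_abs] at h
  have na3 : Complex.abs (C ((0:ℤ),(n₀:ℤ)) 1 3 - 1) < ε := by
    have h := hCnear _ hin4 1 3
    rwa [(fcc_entry4 hm hn).1, Complex.norm_eq_abs] at h
  have nb0 : Complex.abs (C ((0:ℤ),(0:ℤ)) 1 2 - 1) < ε := by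
    have h := hCnear _ hin1 1 2
    rwa [(fcc_entry1 hm hn).2, Complex.norm_eq_abs] at h
  have nb1 : Complex.abs (C ((m₀:ℤ),(0:ℤ)) 3 1 - 1) < ε := by
    have h := hCnear _ hin2 3 1
    rwa [(fcc_entry2 hm hn).2, Complex.norm_eq_abs] at h
  have nb2 : Complex.abs (C ((m₀:ℤ),(n₀:ℤ)) 0 3 - 1) < ε := by
    have h := hCnear _ hin3 0 3
    rwa [(fcc_entry3 hm hn).2, Complex.norm_eq_abs] at h
  have nb3 : Complex.abs (C ((0:ℤ),(n₀:ℤ)) 2 0 - 1) < ε := by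
    have h := hCnear _ hin4 2 0
    rwa [(fcc_entry4 hm hn).2, Complex.norm_eq_abs] at h
  have hcp : Complex.abs (cPlus m₀ n₀ C - 1) < 4*ε := by
    show Complex.abs (C ((0:ℤ),(0:ℤ)) 3 0 * C ((m₀:ℤ),(0:ℤ)) 0 2 * C ((m₀:ℤ),(n₀:ℤ)) 2 1 *
      C ((0:ℤ),(n₀:ℤ)) 1 3 - 1) < 4*ε
    exact prod4_close (hle _ _ _) (hle _ _ _) (hle _ _ _) na0 na1 na2 na3
  have hcm : Complex.abs (cMinus m₀ n₀ C - 1) < 4*ε := by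
    show Complex.abs (C ((0:ℤ),(0:ℤ)) 1 2 * C ((m₀:ℤ),(0:ℤ)) 3 1 * C ((m₀:ℤ),(n₀:ℤ)) 0 3 *
      C ((0:ℤ),(n₀:ℤ)) 2 0 - 1) < 4*ε
    exact prod4_close (hle _ _ _) (hle _ _ _) (hle _ _ _) nb0 nb1 nb2 nb3
  obtain ⟨κp, hκpim, hκpabs, hlp, hρp⟩ :=
    kappa_construct m₀ n₀ hm hn θ hθ ε hε0 hεθ hεs k _ hcp
  obtain ⟨κm, hκmim, hκmabs, hlm, hρm⟩ :=
    kappa_construct m₀ n₀ hm hn θ hθ ε hε0 hεθ hεs k _ hcm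
  refine ⟨κp, κm, hκpim, hκmim, ⟨0, hκpabs⟩, ⟨0, hκmabs⟩, ?_, ?_⟩
  · -- Φ₊ eigenvector
    set l := Complex.exp (-(Complex.I * κp)) with hldef
    have hl0 : l ≠ 0 := Complex.exp_ne_zero _
    have heig := uP_eigen hm hn hl0 hCoff z1 z3 z6 z8 hlp
    have hmem := memlp_vP (m := m₀) (n := n₀) (C := C) (l := l) (θ := θ) hm hn hρp
    refine ⟨⟨vfun θ (uP m₀ n₀ C l), hmem⟩, ?_, ?_⟩
    · intro hzero
      have h1 := congrArg (fun f : H => (f : ∀ x : Site, V) ((0:ℤ),(0:ℤ)) 0) hzero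
      simp only at h1
      have h3 : vfun θ (uP m₀ n₀ C l) ((0:ℤ),(0:ℤ)) 0 = 1 := by
        rw [vfun_apply, show uP m₀ n₀ C l ((0:ℤ),(0:ℤ)) 0 = 1 from by
          rw [uP_c00 hm hn]; rfl, mul_one]
        show Complex.exp (Complex.I * θ * (((0:ℤ)):ℂ)) = 1
        norm_num
      rw [show ((0:H) : ∀ x : Site, V) = 0 from rfl] at h1
      rw [h3] at h1
      simpa using h1
    · exact package heig _ (fun x i => rfl) S hS (Mfam ε) (hMfam ε hε0 hε1)
  · -- Φ₋ eigenvector via transposition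
    set lM := Complex.exp (-(Complex.I * κm)) with hlMdef
    have hl0M : lM ≠ 0 := Complex.exp_ne_zero _
    have hoffM : ∀ z : Site, z ∉ corners n₀ m₀ → trCoin C z = 1 := fun z hz =>
      trCoin_eq_one (hCoff _ (corners_tr z hz))
    have hpm : cPlus n₀ m₀ (trCoin C) = cMinus m₀ n₀ C := by
      show C ((0:ℤ),(0:ℤ)) 1 2 * C ((0:ℤ),(n₀:ℤ)) 2 0 * C ((m₀:ℤ),(n₀:ℤ)) 0 3 *
        C ((m₀:ℤ),(0:ℤ)) 3 1 = _
      show _ = C ((0:ℤ),(0:ℤ)) 1 2 * C ((m₀:ℤ),(0:ℤ)) 3 1 * C ((m₀:ℤ),(n₀:ℤ)) 0 3 *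
        C ((0:ℤ),(n₀:ℤ)) 2 0
      ring
    have hlM' : lM ^ (2*(n₀+m₀) : ℤ) = cPlus n₀ m₀ (trCoin C) := by
      rw [hpm, show (2*(n₀+m₀) : ℤ) = 2*(m₀+n₀) from by ring]
      exact hlm
    have heig' := uP_eigen hn hm hl0M hoffM
      (show trCoin C ((0:ℤ),(0:ℤ)) 1 0 = 0 from z2)
      (show trCoin C ((n₀:ℤ),(0:ℤ)) 3 2 = 0 from z7)
      (show trCoin C ((n₀:ℤ),(m₀:ℤ)) 0 1 = 0 from z5)
      (show trCoin C ((0:ℤ),(m₀:ℤ)) 2 3 = 0 from z4)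
      hlM'
    have heigM : ∀ x i, ptWalk C (trFun (uP n₀ m₀ (trCoin C) lM)) x i =
        lM * trFun (uP n₀ m₀ (trCoin C) lM) x i := by
      have h := ptWalk_trFun heig'
      rwa [trCoin_trCoin] at h
    have hmemM := memlp_trFun (memlp_vP (m := n₀) (n := m₀) (C := trCoin C) (l := lM)
      (θ := θ) hn hm hρm)
    refine ⟨⟨vfun θ (trFun (uP n₀ m₀ (trCoin C) lM)), hmemM⟩, ?_, ?_⟩
    · intro hzero
      have h1 := congrArg (fun f : H => (f : ∀ x : Site, V) ((0:ℤ),(0:ℤ)) 2) hzero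
      simp only at h1
      have h3 : vfun θ (trFun (uP n₀ m₀ (trCoin C) lM)) ((0:ℤ),(0:ℤ)) 2 = 1 := by
        rw [vfun_apply, show trFun (uP n₀ m₀ (trCoin C) lM) ((0:ℤ),(0:ℤ)) 2 = 1 from by
          show uP n₀ m₀ (trCoin C) lM ((0:ℤ),(0:ℤ)) 0 = 1
          rw [uP_c00 hn hm]; rfl, mul_one]
        show Complex.exp (Complex.I * θ * (((0:ℤ)):ℂ)) = 1
        norm_num
      rw [show ((0:H) : ∀ x : Site, V) = 0 from rfl] at h1
      rw [h3] at h1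
      simpa using h1
    · exact package heigM _ (fun x i => rfl) S hS (Mfam ε) (hMfam ε hε0 hε1)

end QWPaper
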